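/- arXiv:2308.16478 — 3 statements merged into one kernel-verified Lean document; each statement's English description precedes it below -/
import Mathlib

section
/- Let h be a nonnegative measurable function on [0,∞) with α := ∫₀^∞ h(t) dt < 1 and ∫₀^∞ x^r h(x) dx < ∞ for some r > 0. Then ∫₀^∞ x^r ψ(x) dx < ∞, where ψ = Σ_{n≥1} h^{*n}. Specifically, ∫₀^∞ x^r h^{*n}(x) dx ≤ n^{max(r,1)} α^{n-1} ∫₀^∞ x^r h(x) dx. -/
open MeasureTheory intervalIntegral

/-- Convolution on `[0,∞)`: `(f*g)(t) = ∫₀ᵗ f(t-s) g(s) ds`. -/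
noncomputable def conv (f g : ℝ → ℝ) (t : ℝ) : ℝ := ∫ s in (0:ℝ)..t, f (t - s) * g s

/-- `convPow h n = h^{*(n+1)}`: the `(n+1)`-fold convolution power of `h`. -/
noncomputable def convPow (h : ℝ → ℝ) : ℕ → ℝ → ℝ
  | 0 => h
  | n + 1 => conv (convPow h n) h

open Set ENNReal NNReal

lemma conv_measurable {f g : ℝ → ℝ} (hf : Measurable f) (hg : Measurable g) :
    Measurable (conv f g) := by
  have hjoint : Measurable (fun p : ℝ × ℝ => f (p.1 - p.2) * g p.2) :=
    (hf.comp (measurable_fst.sub measurable_snd)).mul (hg.comp measurable_snd)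
  have key : ∀ a b : ℝ → ℝ, Measurable a → Measurable b →
      Measurable (fun t => ∫ s in Ioc (a t) (b t), f (t - s) * g s) := by
    intro a b ha hb
    have : ∀ t, (∫ s in Ioc (a t) (b t), f (t - s) * g s)
        = ∫ s, (fun p : ℝ × ℝ => (Ioc (a p.1) (b p.1)).indicator
            (fun s => f (p.1 - s) * g s) p.2) (t, s) := by
      intro t
      rw [← MeasureTheory.integral_indicator measurableSet_Ioc]
    simp only [this]
    apply StronglyMeasurable.measurable
    apply MeasureTheory.StronglyMeasurable.integral_prod_right'
      (f := fun p : ℝ × ℝ => (Ioc (a p.1) (b p.1)).indicator (fun s => f (p.1 - s) * g s) p.2)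
    apply Measurable.stronglyMeasurable
    have hset : MeasurableSet {p : ℝ × ℝ | a p.1 < p.2 ∧ p.2 ≤ b p.1} :=
      ((measurableSet_lt (ha.comp measurable_fst) measurable_snd).inter
        (measurableSet_le measurable_snd (hb.comp measurable_fst)))
    have : (fun p : ℝ × ℝ => (Ioc (a p.1) (b p.1)).indicator
        (fun s => f (p.1 - s) * g s) p.2)
        = Set.indicator {p : ℝ × ℝ | a p.1 < p.2 ∧ p.2 ≤ b p.1}
            (fun p => f (p.1 - p.2) * g p.2) := by
      ext p
      simp only [Set.indicator_apply, Set.mem_Ioc, Set.mem_setOf_eq]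
    rw [this]
    exact hjoint.indicator hset
  have : conv f g = fun t => (∫ s in Ioc 0 t, f (t - s) * g s)
      - ∫ s in Ioc t 0, f (t - s) * g s := by
    ext t
    rfl
  rw [this]
  exact (key (fun _ => 0) id measurable_const measurable_id).sub
    (key id (fun _ => 0) measurable_id measurable_const)

lemma convPow_measurable {h : ℝ → ℝ} (hm : Measurable h) (n : ℕ) :
    Measurable (convPow h n) := by
  induction n with
  | zero => exact hm
  | succ n ih => exact conv_measurable ih hm

lemma conv_nonneg {f g : ℝ → ℝ} (hf : ∀ t, 0 ≤ t → 0 ≤ f t) (hg : ∀ t, 0 ≤ g t)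
    {t : ℝ} (ht : 0 ≤ t) : 0 ≤ conv f g t := by
  apply intervalIntegral.integral_nonneg ht
  intro u hu
  exact mul_nonneg (hf _ (by linarith [hu.1, hu.2])) (hg u)

lemma convPow_nonneg {h : ℝ → ℝ} (hh : ∀ t, 0 ≤ h t) (n : ℕ) :
    ∀ t, 0 ≤ t → 0 ≤ convPow h n t := by
  induction n with
  | zero => exact fun t _ => hh t
  | succ n ih => exact fun t ht => conv_nonneg ih hh ht

lemma ofReal_integral_le {f : ℝ → ℝ} {μ : Measure ℝ} (hf : AEStronglyMeasurable f μ)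
    (h0 : 0 ≤ᵐ[μ] f) : ENNReal.ofReal (∫ x, f x ∂μ) ≤ ∫⁻ x, ENNReal.ofReal (f x) ∂μ := by
  rw [MeasureTheory.integral_eq_lintegral_of_nonneg_ae h0 hf]
  exact ENNReal.ofReal_toReal_le

lemma conv_lintegral_le (φ : ℝ → ℝ≥0∞) (hφ : Measurable φ)
    {f g : ℝ → ℝ} (hf : Measurable f) (hg : Measurable g)
    (hf0 : ∀ t, 0 ≤ t → 0 ≤ f t) (hg0 : ∀ t, 0 ≤ g t) :
    ∫⁻ x in Ioi 0, φ x * ENNReal.ofReal (conv f g x)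
      ≤ ∫⁻ v in Ioi 0, ∫⁻ u in Ioi 0, φ (u + v) * ENNReal.ofReal (f u) * ENNReal.ofReal (g v) := by
  set G : ℝ → ℝ → ℝ≥0∞ := fun x s =>
    (Ioc 0 x).indicator (fun s => φ x * ENNReal.ofReal (f (x - s)) * ENNReal.ofReal (g s)) s
    with hG
  -- joint measurability of G
  have hGm : Measurable (fun p : ℝ × ℝ => G p.1 p.2) := by
    have hset : MeasurableSet {p : ℝ × ℝ | 0 < p.2 ∧ p.2 ≤ p.1} :=
      (measurableSet_lt measurable_const measurable_snd).inter
        (measurableSet_le measurable_snd measurable_fst)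
    have : (fun p : ℝ × ℝ => G p.1 p.2) = Set.indicator {p : ℝ × ℝ | 0 < p.2 ∧ p.2 ≤ p.1}
        (fun p => φ p.1 * ENNReal.ofReal (f (p.1 - p.2)) * ENNReal.ofReal (g p.2)) := by
      ext p
      simp only [hG, Set.indicator_apply, Set.mem_Ioc, Set.mem_setOf_eq]
    rw [this]
    exact (((hφ.comp measurable_fst).mul
      ((ENNReal.measurable_ofReal.comp (hf.comp (measurable_fst.sub measurable_snd))))).mul
      (ENNReal.measurable_ofReal.comp (hg.comp measurable_snd))).indicator hset
  -- step 1: pointwise bound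
  have step1 : ∀ x ∈ Ioi (0:ℝ), φ x * ENNReal.ofReal (conv f g x) ≤ ∫⁻ s, G x s := by
    intro x hx
    have hx0 : (0:ℝ) ≤ x := le_of_lt hx
    have hconv : conv f g x = ∫ s in Ioc 0 x, f (x - s) * g s :=
      intervalIntegral.integral_of_le hx0
    have hae : 0 ≤ᵐ[volume.restrict (Ioc 0 x)] fun s => f (x - s) * g s := by
      refine (ae_restrict_iff' measurableSet_Ioc).2 (Filter.Eventually.of_forall ?_)
      intro s hs
      exact mul_nonneg (hf0 _ (by linarith [hs.2])) (hg0 s)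
    have h1 : ENNReal.ofReal (conv f g x)
        ≤ ∫⁻ s in Ioc 0 x, ENNReal.ofReal (f (x - s) * g s) := by
      rw [hconv]
      exact ofReal_integral_le
        (((hf.comp (measurable_const.sub measurable_id)).mul hg).aestronglyMeasurable) hae
    have h2 : (∫⁻ s in Ioc 0 x, ENNReal.ofReal (f (x - s) * g s))
        = ∫⁻ s in Ioc 0 x, ENNReal.ofReal (f (x - s)) * ENNReal.ofReal (g s) := by
      refine setLIntegral_congr_fun measurableSet_Ioc ?_
      intro s hs
      dsimp only
      rw [ENNReal.ofReal_mul (hf0 _ (by linarith [hs.2]))]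
    calc φ x * ENNReal.ofReal (conv f g x)
        ≤ φ x * ∫⁻ s in Ioc 0 x, ENNReal.ofReal (f (x - s)) * ENNReal.ofReal (g s) := by
          rw [← h2]; exact mul_le_mul_right h1 _
      _ = ∫⁻ s in Ioc 0 x, φ x * (ENNReal.ofReal (f (x - s)) * ENNReal.ofReal (g s)) :=
          (lintegral_const_mul _ ((ENNReal.measurable_ofReal.comp
            (hf.comp (measurable_const.sub measurable_id))).mul
            (ENNReal.measurable_ofReal.comp hg))).symm
      _ = ∫⁻ s, G x s := by
          rw [hG]
          simp only
          rw [lintegral_indicator measurableSet_Ioc]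
          exact setLIntegral_congr_fun measurableSet_Ioc
            (fun s _ => by ring)
  -- step 3: inner integral computation for a fixed s
  have step3 : ∀ s : ℝ, (∫⁻ x in Ioi 0, G x s)
      = (Ioi 0).indicator (fun s => ENNReal.ofReal (g s)
          * ∫⁻ u in Ioi 0, φ (u + s) * ENNReal.ofReal (f u)) s := by
    intro s
    rcases le_or_gt s 0 with hs | hs
    · rw [Set.indicator_of_notMem (by simpa using hs)]
      have : ∀ x, G x s = 0 := by
        intro x
        rw [hG]
        exact Set.indicator_of_notMem (fun hc => absurd hc.1 (not_lt.2 hs)) _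
      simp [this]
    · rw [Set.indicator_of_mem (show s ∈ Ioi (0:ℝ) from hs)]
      have hGx : ∀ x, G x s = (Ici s).indicator
          (fun x => φ x * ENNReal.ofReal (f (x - s)) * ENNReal.ofReal (g s)) x := by
        intro x
        simp only [hG, Set.indicator_apply, Set.mem_Ioc, Set.mem_Ici]
        by_cases hxs : s ≤ x
        · simp [hxs, hs]
        · simp [hxs]
      simp only [hGx]
      rw [lintegral_indicator measurableSet_Ici, Measure.restrict_restrict measurableSet_Ici]
      have hsub : Ici s ∩ Ioi 0 = Ici s := by
        apply Set.inter_eq_self_of_subset_left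
        intro x hx
        exact lt_of_lt_of_le hs hx
      rw [hsub]
      -- pull out the constant ofReal (g s)
      have : (∫⁻ x in Ici s, φ x * ENNReal.ofReal (f (x - s)) * ENNReal.ofReal (g s))
          = (∫⁻ x in Ici s, φ x * ENNReal.ofReal (f (x - s))) * ENNReal.ofReal (g s) :=
        lintegral_mul_const' _ _ (by simp)
      rw [this, mul_comm]
      congr 1
      -- translation invariance
      have hFm : Measurable fun x => φ x * ENNReal.ofReal (f (x - s)) :=
        hφ.mul (ENNReal.measurable_ofReal.comp (hf.comp (measurable_id.sub measurable_const)))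
      have hIm : Measurable ((Ici s).indicator (fun x => φ x * ENNReal.ofReal (f (x - s)))) :=
        hFm.indicator measurableSet_Ici
      calc (∫⁻ x in Ici s, φ x * ENNReal.ofReal (f (x - s)))
          = ∫⁻ x, (Ici s).indicator (fun x => φ x * ENNReal.ofReal (f (x - s))) x :=
            (lintegral_indicator measurableSet_Ici _).symm
        _ = ∫⁻ x, (Ici s).indicator (fun x => φ x * ENNReal.ofReal (f (x - s))) x
              ∂(Measure.map (· + s) volume) := by rw [map_add_right_eq_self]
        _ = ∫⁻ u, (Ici s).indicator (fun x => φ x * ENNReal.ofReal (f (x - s))) (u + s) := by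
            rw [lintegral_map hIm (measurable_add_const s)]
        _ = ∫⁻ u, (Ici 0).indicator (fun u => φ (u + s) * ENNReal.ofReal (f u)) u := by
            congr 1
            ext u
            simp only [Set.indicator_apply, Set.mem_Ici]
            by_cases hu : (0:ℝ) ≤ u
            · simp [hu, show s ≤ u + s by linarith]
            · have h2 : ¬ s ≤ u + s := by intro hc; exact hu (by linarith)
              simp [hu, h2]
        _ = ∫⁻ u in Ici 0, φ (u + s) * ENNReal.ofReal (f u) :=
            lintegral_indicator measurableSet_Ici _
        _ = ∫⁻ u in Ioi 0, φ (u + s) * ENNReal.ofReal (f u) := by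
            rw [MeasureTheory.restrict_Ioi_eq_restrict_Ici]
  -- assemble
  calc (∫⁻ x in Ioi 0, φ x * ENNReal.ofReal (conv f g x))
      ≤ ∫⁻ x in Ioi 0, ∫⁻ s, G x s := by
        refine setLIntegral_mono' measurableSet_Ioi step1
    _ = ∫⁻ s, ∫⁻ x in Ioi 0, G x s := by
        apply lintegral_lintegral_swap
        exact hGm.aemeasurable
    _ = ∫⁻ s, (Ioi 0).indicator (fun s => ENNReal.ofReal (g s)
          * ∫⁻ u in Ioi 0, φ (u + s) * ENNReal.ofReal (f u)) s := by
        simp only [step3]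
    _ = ∫⁻ v in Ioi 0, ENNReal.ofReal (g v) * ∫⁻ u in Ioi 0, φ (u + v) * ENNReal.ofReal (f u) :=
        lintegral_indicator measurableSet_Ioi _
    _ = ∫⁻ v in Ioi 0, ∫⁻ u in Ioi 0, φ (u + v) * ENNReal.ofReal (f u) * ENNReal.ofReal (g v) := by
        refine setLIntegral_congr_fun measurableSet_Ioi ?_
        intro v _
        dsimp only
        rw [mul_comm, lintegral_mul_const' _ _ (by simp)]

open Real in
lemma rpow_add_le_add_rpow_real {u v r : ℝ} (hu : 0 ≤ u) (hv : 0 ≤ v) (hr0 : 0 ≤ r)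
    (hr1 : r ≤ 1) : (u + v) ^ r ≤ u ^ r + v ^ r := by
  have h := NNReal.rpow_add_le_add_rpow (Real.toNNReal u) (Real.toNNReal v) hr0 hr1
  have hcoe : (((Real.toNNReal u + Real.toNNReal v) ^ r : ℝ≥0) : ℝ) = (u + v) ^ r := by
    rw [← Real.toNNReal_add hu hv, ← Real.toNNReal_rpow_of_nonneg (by linarith),
      Real.coe_toNNReal _ (Real.rpow_nonneg (by linarith) r)]
  have hcu : (((Real.toNNReal u) ^ r : ℝ≥0) : ℝ) = u ^ r := by
    rw [← Real.toNNReal_rpow_of_nonneg hu, Real.coe_toNNReal _ (Real.rpow_nonneg hu r)]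
  have hcv : (((Real.toNNReal v) ^ r : ℝ≥0) : ℝ) = v ^ r := by
    rw [← Real.toNNReal_rpow_of_nonneg hv, Real.coe_toNNReal _ (Real.rpow_nonneg hv r)]
  have h2 := (NNReal.coe_le_coe).2 h
  rw [NNReal.coe_add, hcoe, hcu, hcv] at h2
  exact h2

open Real in
/-- The weighted power-mean inequality specialised to two points. -/
lemma key_ineq {r : ℝ} (hr : 0 < r) {lam : ℝ} (hl0 : 0 < lam) (hl1 : lam < 1)
    {u v : ℝ} (hu : 0 ≤ u) (hv : 0 ≤ v) :
    (u + v) ^ r ≤ lam ^ (1 - max r 1) * u ^ r + (1 - lam) ^ (1 - max r 1) * v ^ r := by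
  rcases le_or_gt r 1 with h1 | h1
  · rw [max_eq_right h1, sub_self, Real.rpow_zero, Real.rpow_zero, one_mul, one_mul]
    exact rpow_add_le_add_rpow_real hu hv hr.le h1
  · rw [max_eq_left h1.le]
    have hml : 0 < 1 - lam := by linarith
    have hconv := (convexOn_rpow h1.le).2 (Set.mem_Ici.2 (show (0:ℝ) ≤ u / lam by positivity))
      (Set.mem_Ici.2 (show (0:ℝ) ≤ v / (1 - lam) by positivity)) hl0.le hml.le (by ring)
    simp only [smul_eq_mul] at hconv
    have he : lam * (u / lam) + (1 - lam) * (v / (1 - lam)) = u + v := by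
      field_simp
    rw [he] at hconv
    refine hconv.trans (le_of_eq ?_)
    rw [Real.div_rpow hu hl0.le, Real.div_rpow hv hml.le]
    rw [Real.rpow_sub hl0, Real.rpow_sub hml, Real.rpow_one]
    field_simp
    simp only [Real.rpow_one, pow_one]
    ring

open Real in
lemma coeff_sum {p : ℝ} (hp : 1 ≤ p) (n : ℕ) :
    (((n:ℝ)+1)/((n:ℝ)+2)) ^ (1-p) * ((n:ℝ)+1) ^ p + (1 - ((n:ℝ)+1)/((n:ℝ)+2)) ^ (1-p)
      = ((n:ℝ)+2) ^ p := by
  have ha : (0:ℝ) < (n:ℝ)+1 := by positivity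
  have hb : (0:ℝ) < (n:ℝ)+2 := by positivity
  have h1 : 1 - ((n:ℝ)+1)/((n:ℝ)+2) = 1/((n:ℝ)+2) := by
    field_simp
    norm_num
  rw [h1, Real.div_rpow ha.le hb.le, Real.div_rpow zero_le_one hb.le, Real.one_rpow]
  rw [div_mul_eq_mul_div, ← Real.rpow_add ha, sub_add_cancel, Real.rpow_one]
  rw [← add_div, Real.rpow_sub hb, Real.rpow_one]
  have hbp : ((n:ℝ)+2) ^ p ≠ 0 := by positivity
  field_simp
  ring

open Real in
/-- Master induction: bounds on the mass and the `r`-th moment of `convPow h n`. -/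
lemma convPow_bounds
    (h : ℝ → ℝ) (α r M : ℝ)
    (hmeas : Measurable h) (hnonneg : ∀ t, 0 ≤ h t)
    (hαdef : ENNReal.ofReal α = ∫⁻ t in Ioi 0, ENNReal.ofReal (h t))
    (hMdef : ENNReal.ofReal M = ∫⁻ x in Ioi 0, ENNReal.ofReal (x ^ r) * ENNReal.ofReal (h x))
    (hα0 : 0 ≤ α) (hM0 : 0 ≤ M) (hr : 0 < r) (n : ℕ) :
      (∫⁻ x in Ioi 0, ENNReal.ofReal (convPow h n x)) ≤ ENNReal.ofReal (α ^ (n+1)) ∧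
      (∫⁻ x in Ioi 0, ENNReal.ofReal (x ^ r) * ENNReal.ofReal (convPow h n x))
        ≤ ENNReal.ofReal (((n:ℝ)+1) ^ max r 1 * α ^ n * M) := by
  set p := max r 1 with hp
  have hp1 : 1 ≤ p := le_max_right _ _
  have hφm : Measurable fun x : ℝ => ENNReal.ofReal (x ^ r) :=
    (Real.continuous_rpow_const hr.le).measurable.ennreal_ofReal
  induction n with
  | zero =>
    constructor
    · rw [pow_one, hαdef]
      exact le_of_eq rfl
    · simp only [Nat.cast_zero, zero_add, Real.one_rpow, pow_zero, one_mul, hMdef]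
      exact le_refl _
  | succ n ih =>
    obtain ⟨ihA, ihL⟩ := ih
    have hF : Measurable (convPow h n) := convPow_measurable hmeas n
    have hF0 : ∀ t, 0 ≤ t → 0 ≤ convPow h n t := convPow_nonneg hnonneg n
    constructor
    · -- mass bound
      have key := conv_lintegral_le (fun _ => 1) measurable_const hF hmeas hF0 hnonneg
      simp only [one_mul] at key
      have hrhs : (∫⁻ v in Ioi 0, ∫⁻ u in Ioi 0,
            ENNReal.ofReal (convPow h n u) * ENNReal.ofReal (h v))
          = (∫⁻ u in Ioi 0, ENNReal.ofReal (convPow h n u))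
            * ∫⁻ v in Ioi 0, ENNReal.ofReal (h v) := by
        rw [← lintegral_const_mul (∫⁻ u in Ioi 0, ENNReal.ofReal (convPow h n u))
          hmeas.ennreal_ofReal]
        refine setLIntegral_congr_fun measurableSet_Ioi ?_
        intro v _
        dsimp only
        rw [lintegral_mul_const' _ _ (by simp), mul_comm]
      calc (∫⁻ x in Ioi 0, ENNReal.ofReal (convPow h (n+1) x))
          ≤ _ := key
        _ = (∫⁻ u in Ioi 0, ENNReal.ofReal (convPow h n u))
            * ∫⁻ v in Ioi 0, ENNReal.ofReal (h v) := hrhs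
        _ ≤ ENNReal.ofReal (α ^ (n+1)) * ENNReal.ofReal α := by
            exact mul_le_mul' ihA (le_of_eq hαdef.symm)
        _ = ENNReal.ofReal (α ^ (n+1+1)) := by
            rw [← ENNReal.ofReal_mul (by positivity), ← pow_succ]
    · -- moment bound
      set lam : ℝ := ((n:ℝ)+1)/((n:ℝ)+2) with hlam
      have hl0 : 0 < lam := by positivity
      have hl1 : lam < 1 := by
        rw [hlam, div_lt_one (by positivity)]
        linarith
      set c1 : ℝ := lam ^ (1 - p) with hc1
      set c2 : ℝ := (1 - lam) ^ (1 - p) with hc2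
      have hc10 : 0 ≤ c1 := Real.rpow_nonneg hl0.le _
      have hc20 : 0 ≤ c2 := Real.rpow_nonneg (by linarith) _
      have key := conv_lintegral_le (fun x => ENNReal.ofReal (x ^ r)) hφm hF hmeas hF0 hnonneg
      -- bound the double integral
      have hdouble : (∫⁻ v in Ioi 0, ∫⁻ u in Ioi 0, ENNReal.ofReal ((u + v) ^ r)
            * ENNReal.ofReal (convPow h n u) * ENNReal.ofReal (h v))
          ≤ ENNReal.ofReal c1 * ((∫⁻ u in Ioi 0, ENNReal.ofReal (u ^ r)
              * ENNReal.ofReal (convPow h n u)) * ∫⁻ v in Ioi 0, ENNReal.ofReal (h v))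
            + ENNReal.ofReal c2 * ((∫⁻ u in Ioi 0, ENNReal.ofReal (convPow h n u))
              * ∫⁻ v in Ioi 0, ENNReal.ofReal (v ^ r) * ENNReal.ofReal (h v)) := by
        have hmono : ∀ v ∈ Ioi (0:ℝ), (∫⁻ u in Ioi 0, ENNReal.ofReal ((u + v) ^ r)
              * ENNReal.ofReal (convPow h n u) * ENNReal.ofReal (h v))
            ≤ ∫⁻ u in Ioi 0, (ENNReal.ofReal c1 * (ENNReal.ofReal (u ^ r)
                * ENNReal.ofReal (convPow h n u) * ENNReal.ofReal (h v))
              + ENNReal.ofReal c2 * (ENNReal.ofReal (v ^ r)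
                * ENNReal.ofReal (convPow h n u) * ENNReal.ofReal (h v))) := by
          intro v hv
          refine setLIntegral_mono' measurableSet_Ioi ?_
          intro u hu
          have hkey := key_ineq hr hl0 hl1 (le_of_lt hu) (le_of_lt hv)
          have h1 : ENNReal.ofReal ((u + v) ^ r)
              ≤ ENNReal.ofReal (c1 * u ^ r) + ENNReal.ofReal (c2 * v ^ r) := by
            rw [← ENNReal.ofReal_add (mul_nonneg hc10 (Real.rpow_nonneg (le_of_lt hu) _))
              (mul_nonneg hc20 (Real.rpow_nonneg (le_of_lt hv) _))]
            exact ENNReal.ofReal_le_ofReal hkey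
          calc ENNReal.ofReal ((u + v) ^ r) * ENNReal.ofReal (convPow h n u)
                * ENNReal.ofReal (h v)
              ≤ (ENNReal.ofReal (c1 * u ^ r) + ENNReal.ofReal (c2 * v ^ r))
                * ENNReal.ofReal (convPow h n u) * ENNReal.ofReal (h v) := by
                exact mul_le_mul' (mul_le_mul' h1 (le_refl _)) (le_refl _)
            _ = ENNReal.ofReal c1 * (ENNReal.ofReal (u ^ r) * ENNReal.ofReal (convPow h n u)
                  * ENNReal.ofReal (h v))
                + ENNReal.ofReal c2 * (ENNReal.ofReal (v ^ r) * ENNReal.ofReal (convPow h n u)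
                  * ENNReal.ofReal (h v)) := by
                rw [ENNReal.ofReal_mul hc10, ENNReal.ofReal_mul hc20]
                ring
        calc (∫⁻ v in Ioi 0, ∫⁻ u in Ioi 0, ENNReal.ofReal ((u + v) ^ r)
              * ENNReal.ofReal (convPow h n u) * ENNReal.ofReal (h v))
            ≤ ∫⁻ v in Ioi 0, ∫⁻ u in Ioi 0, (ENNReal.ofReal c1 * (ENNReal.ofReal (u ^ r)
                * ENNReal.ofReal (convPow h n u) * ENNReal.ofReal (h v))
              + ENNReal.ofReal c2 * (ENNReal.ofReal (v ^ r)
                * ENNReal.ofReal (convPow h n u) * ENNReal.ofReal (h v))) :=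
              setLIntegral_mono' measurableSet_Ioi hmono
          _ = ENNReal.ofReal c1 * ((∫⁻ u in Ioi 0, ENNReal.ofReal (u ^ r)
                * ENNReal.ofReal (convPow h n u)) * ∫⁻ v in Ioi 0, ENNReal.ofReal (h v))
              + ENNReal.ofReal c2 * ((∫⁻ u in Ioi 0, ENNReal.ofReal (convPow h n u))
                * ∫⁻ v in Ioi 0, ENNReal.ofReal (v ^ r) * ENNReal.ofReal (h v)) := by
              set A := ∫⁻ u in Ioi 0, ENNReal.ofReal (u ^ r) * ENNReal.ofReal (convPow h n u)
                with hA
              set B := ∫⁻ u in Ioi 0, ENNReal.ofReal (convPow h n u) with hB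
              have hGm : Measurable fun u : ℝ => ENNReal.ofReal (u ^ r)
                  * ENNReal.ofReal (convPow h n u) := hφm.mul hF.ennreal_ofReal
              have hint1 : ∀ v : ℝ, (∫⁻ u in Ioi 0, (ENNReal.ofReal c1 * (ENNReal.ofReal (u ^ r)
                    * ENNReal.ofReal (convPow h n u) * ENNReal.ofReal (h v))
                  + ENNReal.ofReal c2 * (ENNReal.ofReal (v ^ r)
                    * ENNReal.ofReal (convPow h n u) * ENNReal.ofReal (h v))))
                  = (ENNReal.ofReal c1 * A) * ENNReal.ofReal (h v)
                    + (ENNReal.ofReal c2 * (ENNReal.ofReal (v ^ r) * ENNReal.ofReal (h v))) * B := by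
                intro v
                rw [lintegral_add_left (f := fun u => ENNReal.ofReal c1 * (ENNReal.ofReal (u ^ r)
                    * ENNReal.ofReal (convPow h n u) * ENNReal.ofReal (h v)))
                  (((hGm.mul measurable_const).const_mul _))]
                congr 1
                · have : ∀ u : ℝ, ENNReal.ofReal c1 * (ENNReal.ofReal (u ^ r)
                      * ENNReal.ofReal (convPow h n u) * ENNReal.ofReal (h v))
                      = (ENNReal.ofReal c1 * ENNReal.ofReal (h v)) * (ENNReal.ofReal (u ^ r)
                      * ENNReal.ofReal (convPow h n u)) := by intro u; ring
                  simp only [this]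
                  rw [lintegral_const_mul _ hGm]
                  ring
                · have : ∀ u : ℝ, ENNReal.ofReal c2 * (ENNReal.ofReal (v ^ r)
                      * ENNReal.ofReal (convPow h n u) * ENNReal.ofReal (h v))
                      = (ENNReal.ofReal c2 * (ENNReal.ofReal (v ^ r) * ENNReal.ofReal (h v)))
                      * ENNReal.ofReal (convPow h n u) := by intro u; ring
                  simp only [this]
                  rw [lintegral_const_mul _ hF.ennreal_ofReal]
              simp only [hint1]
              rw [lintegral_add_left ((hmeas.ennreal_ofReal.const_mul _))]
              congr 1
              · rw [lintegral_const_mul _ hmeas.ennreal_ofReal, mul_assoc]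
              · have : ∀ v : ℝ, (ENNReal.ofReal c2 * (ENNReal.ofReal (v ^ r)
                    * ENNReal.ofReal (h v))) * B
                    = (ENNReal.ofReal c2 * B) * (ENNReal.ofReal (v ^ r)
                    * ENNReal.ofReal (h v)) := by intro v; ring
                simp only [this]
                rw [lintegral_const_mul _ (f := fun v => ENNReal.ofReal (v ^ r) * ENNReal.ofReal (h v))
                  (hφm.mul hmeas.ennreal_ofReal)]
                ring
      -- combine
      have hfinal : ENNReal.ofReal c1 * ((∫⁻ u in Ioi 0, ENNReal.ofReal (u ^ r)
              * ENNReal.ofReal (convPow h n u)) * ∫⁻ v in Ioi 0, ENNReal.ofReal (h v))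
            + ENNReal.ofReal c2 * ((∫⁻ u in Ioi 0, ENNReal.ofReal (convPow h n u))
              * ∫⁻ v in Ioi 0, ENNReal.ofReal (v ^ r) * ENNReal.ofReal (h v))
          ≤ ENNReal.ofReal ((((n:ℝ)+1)+1) ^ p * α ^ (n+1) * M) := by
        have h1 : ENNReal.ofReal c1 * ((∫⁻ u in Ioi 0, ENNReal.ofReal (u ^ r)
              * ENNReal.ofReal (convPow h n u)) * ∫⁻ v in Ioi 0, ENNReal.ofReal (h v))
            ≤ ENNReal.ofReal c1 * (ENNReal.ofReal (((n:ℝ)+1) ^ p * α ^ n * M)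
              * ENNReal.ofReal α) :=
          mul_le_mul' (le_refl _) (mul_le_mul' ihL (le_of_eq hαdef.symm))
        have h2 : ENNReal.ofReal c2 * ((∫⁻ u in Ioi 0, ENNReal.ofReal (convPow h n u))
              * ∫⁻ v in Ioi 0, ENNReal.ofReal (v ^ r) * ENNReal.ofReal (h v))
            ≤ ENNReal.ofReal c2 * (ENNReal.ofReal (α ^ (n+1)) * ENNReal.ofReal M) :=
          mul_le_mul' (le_refl _) (mul_le_mul' ihA (le_of_eq hMdef.symm))
        refine (add_le_add h1 h2).trans (le_of_eq ?_)
        rw [← ENNReal.ofReal_mul (show (0:ℝ) ≤ ((n:ℝ)+1) ^ p * α ^ n * M by positivity),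
          ← ENNReal.ofReal_mul hc10,
          ← ENNReal.ofReal_mul (show (0:ℝ) ≤ α ^ (n+1) by positivity),
          ← ENNReal.ofReal_mul hc20,
          ← ENNReal.ofReal_add (mul_nonneg hc10 (by positivity))
            (mul_nonneg hc20 (by positivity))]
        congr 1
        have hcoeff := coeff_sum hp1 n
        rw [hc1, hc2, hlam]
        calc (((n:ℝ)+1)/((n:ℝ)+2)) ^ (1-p) * (((n:ℝ)+1) ^ p * α ^ n * M * α)
              + (1 - ((n:ℝ)+1)/((n:ℝ)+2)) ^ (1-p) * (α ^ (n+1) * M)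
            = ((((n:ℝ)+1)/((n:ℝ)+2)) ^ (1-p) * (((n:ℝ)+1) ^ p)
                + (1 - ((n:ℝ)+1)/((n:ℝ)+2)) ^ (1-p)) * (α ^ (n+1) * M) := by ring
          _ = ((n:ℝ)+2) ^ p * (α ^ (n+1) * M) := by rw [hcoeff]
          _ = (((n:ℝ)+1)+1) ^ p * α ^ (n+1) * M := by ring_nf
      calc (∫⁻ x in Ioi 0, ENNReal.ofReal (x ^ r) * ENNReal.ofReal (convPow h (n+1) x))
          ≤ _ := key
        _ ≤ _ := hdouble
        _ ≤ ENNReal.ofReal ((((n:ℝ)+1)+1) ^ p * α ^ (n+1) * M) := hfinal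
        _ = ENNReal.ofReal ((((n+1:ℕ):ℝ)+1) ^ p * α ^ (n+1) * M) := by push_cast; ring_nf

open Real in
lemma summable_poly_geom {α : ℝ} (hα0 : 0 ≤ α) (hα1 : α < 1) (p : ℝ) (hp0 : 0 ≤ p) :
    Summable (fun n : ℕ => ((n:ℝ)+1) ^ p * α ^ n) := by
  set k := ⌈p⌉₊ with hk
  have hbound : ∀ n : ℕ, ((n:ℝ)+1) ^ p * α ^ n ≤ ((n:ℝ)+1) ^ k * α ^ n := by
    intro n
    apply mul_le_mul_of_nonneg_right _ (by positivity)
    calc ((n:ℝ)+1) ^ p ≤ ((n:ℝ)+1) ^ (k:ℝ) :=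
        Real.rpow_le_rpow_of_exponent_le (by simp [Nat.cast_nonneg]) (Nat.le_ceil p)
      _ = ((n:ℝ)+1) ^ k := Real.rpow_natCast _ _
  have hsum : Summable (fun n : ℕ => ((n:ℝ)+1) ^ k * α ^ n) := by
    have hexp : ∀ n : ℕ, ((n:ℝ)+1) ^ k * α ^ n
        = ∑ j ∈ Finset.range (k+1), (k.choose j : ℝ) * ((n:ℝ) ^ j * α ^ n) := by
      intro n
      rw [add_pow, Finset.sum_mul]
      refine Finset.sum_congr rfl fun j _ => by ring
    have hall : ∀ m : ℕ, Summable (fun n : ℕ =>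
        ∑ j ∈ Finset.range m, (k.choose j : ℝ) * ((n:ℝ) ^ j * α ^ n)) := by
      intro m
      induction m with
      | zero => simpa using summable_zero
      | succ m ihm =>
        simp only [Finset.sum_range_succ]
        exact ihm.add ((summable_pow_mul_geometric_of_norm_lt_one (R := ℝ) m
          (by rwa [Real.norm_eq_abs, abs_of_nonneg hα0])).mul_left _)
    exact ((hall (k+1)).congr (fun n => (hexp n).symm))
  exact Summable.of_nonneg_of_le (fun n => by positivity) hbound hsum

open Real in
/-- If `h ≥ 0` is measurable with `∫₀^∞ h = α < 1` and `∫₀^∞ x^r h(x) dx < ∞` for some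
`r > 0`, then `∫₀^∞ x^r ψ(x) dx < ∞` where `ψ = Σ_{n≥1} h^{*n}`, with the explicit bound
`∫₀^∞ x^r h^{*n}(x) dx ≤ n^{max r 1} α^{n-1} ∫₀^∞ x^r h(x) dx`. -/
theorem moment_psi_finite
    (h : ℝ → ℝ) (α r : ℝ)
    (hmeas : Measurable h) (hnonneg : ∀ t, 0 ≤ h t)
    (hint : IntegrableOn h (Set.Ioi 0))
    (hα : α = ∫ t in Set.Ioi (0:ℝ), h t) (hα1 : α < 1)
    (hr : 0 < r)
    (hmom : IntegrableOn (fun x => x ^ r * h x) (Set.Ioi 0)) :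
    (∀ n : ℕ, ∫ x in Set.Ioi (0:ℝ), x ^ r * convPow h n x
        ≤ ((n : ℝ) + 1) ^ max r 1 * α ^ n * ∫ x in Set.Ioi (0:ℝ), x ^ r * h x) ∧
      IntegrableOn (fun x => x ^ r * (∑' n : ℕ, convPow h n x)) (Set.Ioi 0) := by
  have hα0 : 0 ≤ α := by
    rw [hα]
    exact setIntegral_nonneg measurableSet_Ioi (fun x _ => hnonneg x)
  have hαdef : ENNReal.ofReal α = ∫⁻ t in Ioi 0, ENNReal.ofReal (h t) := by
    rw [hα]
    exact ofReal_integral_eq_lintegral_ofReal hint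
      (Filter.Eventually.of_forall hnonneg)
  set M := ∫ x in Set.Ioi (0:ℝ), x ^ r * h x with hM
  have hM0 : 0 ≤ M := setIntegral_nonneg measurableSet_Ioi
    (fun x hx => mul_nonneg (Real.rpow_nonneg (le_of_lt hx) r) (hnonneg x))
  have hmomnn : 0 ≤ᵐ[volume.restrict (Ioi 0)] fun x => x ^ r * h x :=
    (ae_restrict_iff' measurableSet_Ioi).2 (Filter.Eventually.of_forall fun x hx =>
      mul_nonneg (Real.rpow_nonneg (le_of_lt hx) r) (hnonneg x))
  have hMdef : ENNReal.ofReal M = ∫⁻ x in Ioi 0, ENNReal.ofReal (x ^ r)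
      * ENNReal.ofReal (h x) := by
    rw [hM, ofReal_integral_eq_lintegral_ofReal hmom hmomnn]
    exact setLIntegral_congr_fun measurableSet_Ioi (fun x hx =>
      ENNReal.ofReal_mul (Real.rpow_nonneg (le_of_lt hx) r))
  have bounds := convPow_bounds h α r M hmeas hnonneg hαdef hMdef hα0 hM0 hr
  have hφm : Measurable fun x : ℝ => ENNReal.ofReal (x ^ r) :=
    (Real.continuous_rpow_const hr.le).measurable.ennreal_ofReal
  have hBnn : ∀ n : ℕ, (0:ℝ) ≤ ((n:ℝ)+1) ^ max r 1 * α ^ n * M := fun n =>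
    mul_nonneg (mul_nonneg (Real.rpow_nonneg (by positivity) _) (pow_nonneg hα0 n)) hM0
  have hmomn : ∀ n : ℕ, ∫ x in Set.Ioi (0:ℝ), x ^ r * convPow h n x
      ≤ ((n:ℝ)+1) ^ max r 1 * α ^ n * M := by
    intro n
    have hFn := convPow_measurable hmeas n
    have hnn : 0 ≤ᵐ[volume.restrict (Ioi 0)] fun x => x ^ r * convPow h n x :=
      (ae_restrict_iff' measurableSet_Ioi).2 (Filter.Eventually.of_forall fun x hx =>
        mul_nonneg (Real.rpow_nonneg (le_of_lt hx) r)
          (convPow_nonneg hnonneg n x (le_of_lt hx)))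
    rw [MeasureTheory.integral_eq_lintegral_of_nonneg_ae hnn
      (((Real.continuous_rpow_const hr.le).measurable.mul hFn).aestronglyMeasurable)]
    have heq : (∫⁻ x in Ioi 0, ENNReal.ofReal (x ^ r * convPow h n x))
        = ∫⁻ x in Ioi 0, ENNReal.ofReal (x ^ r) * ENNReal.ofReal (convPow h n x) :=
      setLIntegral_congr_fun measurableSet_Ioi (fun x hx =>
        ENNReal.ofReal_mul (Real.rpow_nonneg (le_of_lt hx) r))
    rw [heq]
    have hle := (bounds n).2
    have htr := ENNReal.toReal_mono ENNReal.ofReal_ne_top hle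
    rwa [ENNReal.toReal_ofReal (hBnn n)] at htr
  refine ⟨hmomn, ?_⟩
  -- integrability of the tail sum
  set S : ℝ → ℝ≥0∞ := fun x => ∑' n : ℕ, ENNReal.ofReal (convPow h n x) with hS
  have hSm : Measurable S :=
    Measurable.ennreal_tsum fun n => (convPow_measurable hmeas n).ennreal_ofReal
  have hy1 : ENNReal.ofReal α < 1 := ENNReal.ofReal_lt_one.2 hα1
  have hSfin : (∫⁻ x in Ioi 0, S x) ≠ ⊤ := by
    have h1 : (∫⁻ x in Ioi 0, S x)
        = ∑' n : ℕ, ∫⁻ x in Ioi 0, ENNReal.ofReal (convPow h n x) :=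
      lintegral_tsum fun n => ((convPow_measurable hmeas n).ennreal_ofReal).aemeasurable
    have h2 : (∑' n : ℕ, ∫⁻ x in Ioi 0, ENNReal.ofReal (convPow h n x))
        ≤ ∑' n : ℕ, (ENNReal.ofReal α) ^ n := by
      refine ENNReal.tsum_le_tsum fun n => ?_
      refine ((bounds n).1).trans ?_
      rw [ENNReal.ofReal_pow hα0]
      calc (ENNReal.ofReal α) ^ (n+1) = ENNReal.ofReal α * (ENNReal.ofReal α) ^ n := by
            rw [pow_succ']
        _ ≤ 1 * (ENNReal.ofReal α) ^ n := mul_le_mul' hy1.le (le_refl _)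
        _ = (ENNReal.ofReal α) ^ n := one_mul _
    rw [h1]
    refine ne_top_of_le_ne_top ?_ h2
    rw [ENNReal.tsum_geometric]
    exact ENNReal.inv_ne_top.2 (ne_of_gt (tsub_pos_of_lt hy1))
  have hae_fin : ∀ᵐ x ∂volume.restrict (Ioi 0), S x < ⊤ := ae_lt_top hSm hSfin
  have hae_eq : (fun x => x ^ r * (∑' n : ℕ, convPow h n x))
      =ᵐ[volume.restrict (Ioi 0)] fun x => (ENNReal.ofReal (x ^ r) * S x).toReal := by
    filter_upwards [hae_fin, ae_restrict_mem measurableSet_Ioi] with x hfin hx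
    have hsum_eq : (∑' n : ℕ, convPow h n x) = (S x).toReal := by
      rw [hS]
      rw [ENNReal.tsum_toReal_eq (fun n => ENNReal.ofReal_ne_top)]
      exact tsum_congr fun n =>
        (ENNReal.toReal_ofReal (convPow_nonneg hnonneg n x (le_of_lt hx))).symm
    rw [hsum_eq, ENNReal.toReal_mul, ENNReal.toReal_ofReal (Real.rpow_nonneg (le_of_lt hx) r)]
  have hsm : AEStronglyMeasurable (fun x => x ^ r * (∑' n : ℕ, convPow h n x))
      (volume.restrict (Ioi 0)) :=
    ((hφm.mul hSm).ennreal_toReal.aestronglyMeasurable).congr hae_eq.symm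
  refine ⟨hsm, ?_⟩
  -- finiteness
  rw [hasFiniteIntegral_iff_norm]
  have hlebound : ∀ᵐ x ∂volume.restrict (Ioi 0),
      ENNReal.ofReal ‖x ^ r * (∑' n : ℕ, convPow h n x)‖ ≤ ENNReal.ofReal (x ^ r) * S x := by
    filter_upwards [hae_eq] with x hxeq
    rw [hxeq, Real.norm_eq_abs, abs_of_nonneg ENNReal.toReal_nonneg]
    exact ENNReal.ofReal_toReal_le
  refine lt_of_le_of_lt (lintegral_mono_ae hlebound) ?_
  have hswap : (∫⁻ x in Ioi 0, ENNReal.ofReal (x ^ r) * S x)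
      = ∑' n : ℕ, ∫⁻ x in Ioi 0, ENNReal.ofReal (x ^ r) * ENNReal.ofReal (convPow h n x) := by
    have : ∀ x : ℝ, ENNReal.ofReal (x ^ r) * S x
        = ∑' n : ℕ, ENNReal.ofReal (x ^ r) * ENNReal.ofReal (convPow h n x) := by
      intro x
      rw [hS, ENNReal.tsum_mul_left]
    simp only [this]
    exact lintegral_tsum fun n =>
      (hφm.mul (convPow_measurable hmeas n).ennreal_ofReal).aemeasurable
  rw [hswap]
  have hBsum : Summable (fun n : ℕ => ((n:ℝ)+1) ^ max r 1 * α ^ n * M) :=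
    (summable_poly_geom hα0 hα1 (max r 1)
      (le_trans zero_le_one (le_max_right r 1))).mul_right M
  calc (∑' n : ℕ, ∫⁻ x in Ioi 0, ENNReal.ofReal (x ^ r) * ENNReal.ofReal (convPow h n x))
      ≤ ∑' n : ℕ, ENNReal.ofReal (((n:ℝ)+1) ^ max r 1 * α ^ n * M) :=
        ENNReal.tsum_le_tsum fun n => (bounds n).2
    _ = ENNReal.ofReal (∑' n : ℕ, ((n:ℝ)+1) ^ max r 1 * α ^ n * M) :=
        (ENNReal.ofReal_tsum_of_nonneg hBnn hBsum).symm
    _ < ⊤ := ENNReal.ofReal_lt_top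
end

section
/- Let h be nonnegative bounded measurable on [0,∞) with α := ∫₀^∞ h < 1, h(t) → 0 as t → ∞, and let ψ = Σ_{n≥1} h^{*n}. Then ψ(t) → 0 as t → ∞. -/
open MeasureTheory intervalIntegral

/-- If `h ≥ 0` is bounded measurable with `∫₀^∞ h = α < 1` and `h(t) → 0` as `t → ∞`,
then `ψ(t) = Σ_{n≥1} h^{*n}(t) → 0` as `t → ∞`. -/
theorem psi_tendsto_zero
    (h : ℝ → ℝ) (C α : ℝ)
    (hmeas : Measurable h) (hnonneg : ∀ t, 0 ≤ h t)
    (hint : IntegrableOn h (Set.Ioi 0))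
    (hα : α = ∫ t in Set.Ioi (0:ℝ), h t) (hα1 : α < 1)
    (hC : ∀ t, h t ≤ C)
    (hlim : Filter.Tendsto h Filter.atTop (nhds 0)) :
    Filter.Tendsto (fun t => ∑' n : ℕ, convPow h n t) Filter.atTop (nhds 0) := by
  have hC0 : 0 ≤ C := le_trans (hnonneg 0) (hC 0)
  have hα0 : 0 ≤ α := by
    rw [hα]; exact setIntegral_nonneg measurableSet_Ioi fun x _ => hnonneg x
  have hIoc : ∀ t : ℝ, IntegrableOn h (Set.Ioc 0 t) :=
    fun t => hint.mono_set Set.Ioc_subset_Ioi_self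
  have hpart : ∀ t : ℝ, ∫ s in Set.Ioc 0 t, h s ≤ α := by
    intro t
    rw [hα]
    exact setIntegral_mono_set hint (Filter.Eventually.of_forall fun x => hnonneg x)
      (HasSubset.Subset.eventuallyLE Set.Ioc_subset_Ioi_self)
  -- nonnegativity of convolutions
  have conv_nonneg : ∀ g : ℝ → ℝ, (∀ u, 0 ≤ u → 0 ≤ g u) → ∀ t, 0 ≤ t → 0 ≤ conv g h t := by
    intro g hg t ht
    apply intervalIntegral.integral_nonneg ht
    intro u hu
    exact mul_nonneg (hg _ (by linarith [hu.1, hu.2])) (hnonneg u)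
  -- generic bound for a convolution step
  have conv_le : ∀ (g : ℝ → ℝ) (B : ℝ), 0 ≤ B → (∀ u, 0 ≤ u → 0 ≤ g u) →
      (∀ u, 0 ≤ u → g u ≤ B) → ∀ t, 0 ≤ t → conv g h t ≤ B * α := by
    intro g B hB hg0 hgB t ht
    rw [conv, intervalIntegral.integral_of_le ht]
    calc ∫ s in Set.Ioc 0 t, g (t - s) * h s ≤ ∫ s in Set.Ioc 0 t, B * h s := by
          apply integral_mono_of_nonneg
          · refine (ae_restrict_iff' measurableSet_Ioc).2 (Filter.Eventually.of_forall ?_)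
            intro s hs
            exact mul_nonneg (hg0 _ (by linarith [hs.1, hs.2])) (hnonneg s)
          · exact (hIoc t).const_mul B
          · refine (ae_restrict_iff' measurableSet_Ioc).2 (Filter.Eventually.of_forall ?_)
            intro s hs
            exact mul_le_mul_of_nonneg_right (hgB _ (by linarith [hs.1, hs.2])) (hnonneg s)
      _ = B * ∫ s in Set.Ioc 0 t, h s := by rw [MeasureTheory.integral_const_mul]
      _ ≤ B * α := mul_le_mul_of_nonneg_left (hpart t) hB
  -- bounds on convolution powers
  have pow_nonneg : ∀ n t, 0 ≤ t → 0 ≤ convPow h n t := by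
    intro n
    induction n with
    | zero => exact fun t _ => hnonneg t
    | succ n ih => exact fun t ht => conv_nonneg _ ih t ht
  have pow_bound : ∀ n t, 0 ≤ t → convPow h n t ≤ C * α ^ n := by
    intro n
    induction n with
    | zero => intro t _; show h t ≤ C * α ^ 0; simpa using hC t
    | succ n ih =>
      intro t ht
      have := conv_le (convPow h n) (C * α ^ n) (by positivity) (pow_nonneg n) ih t ht
      calc convPow h (n + 1) t ≤ C * α ^ n * α := this
        _ = C * α ^ (n + 1) := by ring
  -- tails of the integral of h are small
  have tail_eq : ∀ b : ℝ, 0 ≤ b →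
      (∫ s in Set.Ioi b, h s) = α - ∫ s in Set.Ioc 0 b, h s := by
    intro b hb
    have hsplit : Set.Ioi (0:ℝ) = Set.Ioc 0 b ∪ Set.Ioi b := (Set.Ioc_union_Ioi_eq_Ioi hb).symm
    have := setIntegral_union (Set.Ioc_disjoint_Ioi le_rfl) measurableSet_Ioi
      (hIoc b) (hint.mono_set (Set.Ioi_subset_Ioi hb))
    rw [hα, hsplit, this]; ring
  have tail_small : ∀ δ' : ℝ, 0 < δ' → ∃ T' : ℝ, 0 ≤ T' ∧ (∫ s in Set.Ioi T', h s) ≤ δ' := by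
    intro δ' hδ'
    have hten : Filter.Tendsto (fun b => ∫ s in (0:ℝ)..b, h s) Filter.atTop (nhds α) := by
      rw [hα]
      exact intervalIntegral_tendsto_integral_Ioi 0 hint Filter.tendsto_id
    obtain ⟨N, hN⟩ := (Metric.tendsto_atTop.1 hten) δ' hδ'
    refine ⟨max N 0, le_max_right _ _, ?_⟩
    have h1 := hN (max N 0) (le_max_left _ _)
    rw [Real.dist_eq] at h1
    have h2 : (∫ s in (0:ℝ)..(max N 0), h s) = ∫ s in Set.Ioc 0 (max N 0), h s :=
      intervalIntegral.integral_of_le (le_max_right _ _)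
    rw [tail_eq _ (le_max_right _ _)]
    have := abs_lt.1 h1
    linarith [this.1, this.2, h2 ▸ this.1]
  -- key step: convolution with h preserves tending to zero
  have conv_tendsto : ∀ (g : ℝ → ℝ) (B : ℝ), 0 ≤ B → (∀ u, 0 ≤ u → 0 ≤ g u) →
      (∀ u, 0 ≤ u → g u ≤ B) → Filter.Tendsto g Filter.atTop (nhds 0) →
      Filter.Tendsto (conv g h) Filter.atTop (nhds 0) := by
    intro g B hB hg0 hgB hgl
    rw [NormedAddCommGroup.tendsto_nhds_zero]
    intro ε hε
    set δ : ℝ := ε / (2 * (α + 1)) with hδdef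
    have hδ : 0 < δ := by positivity
    set δ' : ℝ := ε / (2 * (B + 1)) with hδ'def
    have hδ'pos : 0 < δ' := by positivity
    obtain ⟨N, hN⟩ := (Metric.tendsto_atTop.1 hgl) δ hδ
    set T : ℝ := max N 0 with hTdef
    have hT0 : 0 ≤ T := le_max_right _ _
    have hT : ∀ u, T ≤ u → g u ≤ δ := by
      intro u hu
      have := hN u (le_trans (le_max_left _ _) hu)
      rw [Real.dist_eq, sub_zero] at this
      exact le_of_lt (lt_of_le_of_lt (le_abs_self _) this)
    obtain ⟨T', hT'0, hT'⟩ := tail_small δ' hδ'pos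
    rw [Filter.eventually_atTop]
    refine ⟨T + T' + 1, fun t ht => ?_⟩
    have ht0 : (0:ℝ) ≤ t := by linarith
    have htT : T' + 1 ≤ t - T := by linarith
    have htT0 : (0:ℝ) ≤ t - T := by linarith
    -- the main estimate
    have key : conv g h t ≤ δ * α + B * δ' := by
      rw [conv, intervalIntegral.integral_of_le ht0]
      have hind : Integrable ((Set.Ioc (t - T) t).indicator h)
          (volume.restrict (Set.Ioc 0 t)) := (hIoc t).indicator measurableSet_Ioc
      calc ∫ s in Set.Ioc 0 t, g (t - s) * h s
          ≤ ∫ s in Set.Ioc 0 t, (δ * h s + B * (Set.Ioc (t - T) t).indicator h s) := by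
            apply integral_mono_of_nonneg
            · refine (ae_restrict_iff' measurableSet_Ioc).2 (Filter.Eventually.of_forall ?_)
              intro s hs
              exact mul_nonneg (hg0 _ (by linarith [hs.1, hs.2])) (hnonneg s)
            · exact ((hIoc t).const_mul δ).add (hind.const_mul B)
            · refine (ae_restrict_iff' measurableSet_Ioc).2 (Filter.Eventually.of_forall ?_)
              intro s hs
              show g (t - s) * h s ≤ δ * h s + B * (Set.Ioc (t - T) t).indicator h s
              by_cases hs' : t - T < s
              · have hmem : s ∈ Set.Ioc (t - T) t := ⟨hs', hs.2⟩
                rw [Set.indicator_of_mem hmem]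
                have : g (t - s) ≤ B := hgB _ (by linarith [hs.2])
                have h1 : g (t - s) * h s ≤ B * h s :=
                  mul_le_mul_of_nonneg_right this (hnonneg s)
                have h2 : 0 ≤ δ * h s := mul_nonneg hδ.le (hnonneg s)
                linarith
              · push_neg at hs'
                have : g (t - s) ≤ δ := hT _ (by linarith)
                have h1 : g (t - s) * h s ≤ δ * h s :=
                  mul_le_mul_of_nonneg_right this (hnonneg s)
                have h2 : 0 ≤ B * (Set.Ioc (t - T) t).indicator h s :=
                  mul_nonneg hB (Set.indicator_nonneg (fun a _ => hnonneg a) s)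
                linarith
        _ = δ * (∫ s in Set.Ioc 0 t, h s)
              + B * ∫ s in Set.Ioc 0 t, (Set.Ioc (t - T) t).indicator h s := by
            rw [integral_add ((hIoc t).const_mul δ) (hind.const_mul B),
              MeasureTheory.integral_const_mul, MeasureTheory.integral_const_mul]
        _ ≤ δ * α + B * δ' := by
            have e1 : (∫ s in Set.Ioc 0 t, (Set.Ioc (t - T) t).indicator h s)
                = ∫ s in Set.Ioc (t - T) t, h s := by
              rw [setIntegral_indicator measurableSet_Ioc,
                Set.inter_eq_self_of_subset_right (Set.Ioc_subset_Ioc_left htT0)]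
            have e2 : (∫ s in Set.Ioc (t - T) t, h s) ≤ ∫ s in Set.Ioi T', h s := by
              apply setIntegral_mono_set (hint.mono_set (Set.Ioi_subset_Ioi hT'0))
                (Filter.Eventually.of_forall fun x => hnonneg x)
              refine HasSubset.Subset.eventuallyLE ?_
              intro s hs
              exact lt_of_le_of_lt (by linarith : T' ≤ t - T) hs.1
            have := mul_le_mul_of_nonneg_left (e2.trans hT') hB
            have h3 := mul_le_mul_of_nonneg_left (hpart t) hδ.le
            rw [e1]
            linarith
    have hnn : 0 ≤ conv g h t := conv_nonneg g hg0 t ht0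
    rw [Real.norm_eq_abs, abs_of_nonneg hnn]
    have e1 : δ * (α + 1) = ε / 2 := by
      rw [hδdef]; field_simp
    have e2 : δ' * (B + 1) = ε / 2 := by
      rw [hδ'def]; field_simp
    nlinarith [mul_pos hδ'pos (by linarith : (0:ℝ) < 1)]
  -- each convolution power tends to zero
  have pow_tendsto : ∀ n, Filter.Tendsto (convPow h n) Filter.atTop (nhds 0) := by
    intro n
    induction n with
    | zero => exact hlim
    | succ n ih =>
      exact conv_tendsto (convPow h n) (C * α ^ n) (by positivity) (pow_nonneg n)
        (pow_bound n) ih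
  -- conclude by dominated convergence for series
  have hsum : Summable (fun n : ℕ => C * α ^ n) :=
    (summable_geometric_of_lt_one hα0 hα1).mul_left C
  have hbound : ∀ᶠ t in Filter.atTop, ∀ n : ℕ, ‖convPow h n t‖ ≤ C * α ^ n := by
    filter_upwards [Filter.eventually_ge_atTop (0:ℝ)] with t ht n
    rw [Real.norm_eq_abs, abs_of_nonneg (pow_nonneg n t ht)]
    exact pow_bound n t ht
  have := tendsto_tsum_of_dominated_convergence (g := fun _ : ℕ => (0:ℝ)) hsum
    pow_tendsto hbound
  simpa using this
end

section
/- Let N be a renewal process with i.i.d. interarrival times having distribution F satisfying ∫₀^∞ x F(dx) = 1/m < ∞ and admitting a density, and let its renewal function Φ(t) = Σ_{n≥0} F^{*n}([0,t]) admit Stone's decomposition Φ = Φ₁ + Φ₂ with Φ₂ finite and Φ₁ absolutely continuous with bounded density φ₁ satisfying φ₁(t) → m. Let h be nonnegative bounded measurable with α = ∫₀^∞ h < 1 and h(t) → 0, and ψ = Σ_{n≥1} h^{*n}. Define E(t) := Φ(t) + ∫₀^t ψ(t−s) Φ(s) ds. Then sup_{v∈[0,1]} |E(Tv)/T − v m/(1−α)|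 → 0 as T → ∞. -/
open MeasureTheory Filter intervalIntegral

/-- Convolution of two measures on `ℝ`. -/
noncomputable def mconv (μ ν : Measure ℝ) : Measure ℝ :=
  (μ.prod ν).map (fun p => p.1 + p.2)

/-- `mpow F n = F^{*n}`, with `F^{*0} = δ₀`. -/
noncomputable def mpow (F : Measure ℝ) : ℕ → Measure ℝ
  | 0 => Measure.dirac 0
  | n + 1 => mconv (mpow F n) F

/-- The renewal measure `Φ = Σ_{n≥0} F^{*n}`. -/
noncomputable def renewalMeasure (F : Measure ℝ) : Measure ℝ :=
  Measure.sum (fun n => mpow F n)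

section aux
variable {h f g : ℝ → ℝ} {C α : ℝ}

lemma meas_setInt {F : ℝ × ℝ → ℝ} (hF : Measurable F) {A : Set (ℝ × ℝ)}
    (hA : MeasurableSet A) : Measurable fun t => ∫ s, A.indicator F (t, s) := by
  have : StronglyMeasurable (A.indicator F) := (hF.indicator hA).stronglyMeasurable
  exact this.integral_prod_right'.measurable

lemma meas_conv (hf : Measurable f) (hg : Measurable g) : Measurable (conv f g) := by
  have hF : Measurable fun p : ℝ × ℝ => f (p.1 - p.2) * g p.2 :=
    (hf.comp (measurable_fst.sub measurable_snd)).mul (hg.comp measurable_snd)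
  have hA : MeasurableSet {p : ℝ × ℝ | 0 < p.2 ∧ p.2 ≤ p.1} :=
    (measurableSet_lt measurable_const measurable_snd).inter
      (measurableSet_le measurable_snd measurable_fst)
  have hB : MeasurableSet {p : ℝ × ℝ | p.1 < p.2 ∧ p.2 ≤ 0} :=
    (measurableSet_lt measurable_fst measurable_snd).inter
      (measurableSet_le measurable_snd measurable_const)
  have h1 : (fun t => ∫ s in Set.Ioc 0 t, f (t - s) * g s)
      = fun t => ∫ s, ({p : ℝ × ℝ | 0 < p.2 ∧ p.2 ≤ p.1}).indicator
          (fun p => f (p.1 - p.2) * g p.2) (t, s) := by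
    funext t
    rw [← MeasureTheory.integral_indicator measurableSet_Ioc]
    congr 1
  have h2 : (fun t => ∫ s in Set.Ioc t 0, f (t - s) * g s)
      = fun t => ∫ s, ({p : ℝ × ℝ | p.1 < p.2 ∧ p.2 ≤ 0}).indicator
          (fun p => f (p.1 - p.2) * g p.2) (t, s) := by
    funext t
    rw [← MeasureTheory.integral_indicator measurableSet_Ioc]
    congr 1
  have : conv f g = fun t => (∫ s in Set.Ioc 0 t, f (t - s) * g s)
      - ∫ s in Set.Ioc t 0, f (t - s) * g s := by
    funext t; rfl
  rw [this]
  exact ((h1 ▸ meas_setInt hF hA)).sub ((h2 ▸ meas_setInt hF hB))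

lemma meas_convPow (hh : Measurable h) : ∀ n, Measurable (convPow h n)
  | 0 => hh
  | n + 1 => meas_conv (meas_convPow hh n) hh

end aux

section aux2
open MeasureTheory Filter intervalIntegral
variable {h : ℝ → ℝ} {C α : ℝ}

lemma int_Ioc_le (hhnn : ∀ t, 0 ≤ h t) (hhint : IntegrableOn h (Set.Ioi 0))
    (hα : α = ∫ t in Set.Ioi (0:ℝ), h t) {u : ℝ} :
    ∫ s in Set.Ioc 0 u, h s ≤ α := by
  rw [hα]
  exact setIntegral_mono_set hhint (Filter.Eventually.of_forall fun s => hhnn s)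
    (Filter.Eventually.of_forall fun s hs => Set.Ioc_subset_Ioi_self hs)

lemma convPow_bound (hhmeas : Measurable h) (hhnn : ∀ t, 0 ≤ h t)
    (hhbdd : ∀ t, h t ≤ C) (hhint : IntegrableOn h (Set.Ioi 0))
    (hα : α = ∫ t in Set.Ioi (0:ℝ), h t) (hC : 0 ≤ C) (hα0 : 0 ≤ α) :
    ∀ n, ∀ u, 0 ≤ u → 0 ≤ convPow h n u ∧ convPow h n u ≤ C * α ^ n := by
  intro n
  induction n with
  | zero => intro u hu; exact ⟨hhnn u, by simpa [convPow] using hhbdd u⟩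
  | succ n ih =>
    intro u hu
    have hIoc : IntegrableOn h (Set.Ioc 0 u) := hhint.mono_set Set.Ioc_subset_Ioi_self
    have hmeasI : Measurable fun s => convPow h n (u - s) * h s :=
      ((meas_convPow hhmeas n).comp (measurable_const.sub measurable_id)).mul hhmeas
    have hII : IntervalIntegrable (fun s => convPow h n (u - s) * h s) volume 0 u := by
      rw [intervalIntegrable_iff_integrableOn_Ioc_of_le hu]
      refine Integrable.bdd_mul (c := C * α ^ n) hIoc
        (((meas_convPow hhmeas n).comp (measurable_const.sub measurable_id)).aestronglyMeasurable) ?_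
      refine (ae_restrict_iff' measurableSet_Ioc).2 (Filter.Eventually.of_forall fun s hs => ?_)
      have h1 : 0 ≤ u - s := by linarith [hs.2]
      have := ih (u - s) h1
      rw [Real.norm_eq_abs, abs_of_nonneg this.1]
      exact this.2
    have hconst : IntervalIntegrable (fun s => (C * α ^ n) * h s) volume 0 u := by
      rw [intervalIntegrable_iff_integrableOn_Ioc_of_le hu]
      exact hIoc.const_mul _
    have hval : convPow h (n+1) u = ∫ s in (0:ℝ)..u, convPow h n (u - s) * h s := rfl
    constructor
    · rw [hval]
      refine intervalIntegral.integral_nonneg hu fun s hs => ?_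
      exact mul_nonneg (ih (u - s) (by linarith [hs.2])).1 (hhnn s)
    · rw [hval]
      calc ∫ s in (0:ℝ)..u, convPow h n (u - s) * h s
          ≤ ∫ s in (0:ℝ)..u, (C * α ^ n) * h s := by
            refine intervalIntegral.integral_mono_on hu hII hconst fun s hs => ?_
            exact mul_le_mul_of_nonneg_right (ih (u - s) (by linarith [hs.2])).2 (hhnn s)
        _ = (C * α ^ n) * ∫ s in (0:ℝ)..u, h s := intervalIntegral.integral_const_mul _ _
        _ ≤ (C * α ^ n) * α := by
            refine mul_le_mul_of_nonneg_left ?_ (by positivity)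
            rw [intervalIntegral.integral_of_le hu]
            exact int_Ioc_le hhnn hhint hα
        _ = C * α ^ (n + 1) := by ring

end aux2

section aux3
open MeasureTheory Filter intervalIntegral
open scoped ENNReal
variable {h : ℝ → ℝ} {C α : ℝ}

noncomputable def psiE (h : ℝ → ℝ) (x : ℝ) : ℝ≥0∞ := ∑' n : ℕ, ENNReal.ofReal (convPow h n x)

noncomputable def psiR (h : ℝ → ℝ) (x : ℝ) : ℝ := (psiE h x).toReal

lemma psiE_meas (hhmeas : Measurable h) : Measurable (psiE h) :=
  Measurable.ennreal_tsum fun n => (meas_convPow hhmeas n).ennreal_ofReal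

lemma psiR_meas (hhmeas : Measurable h) : Measurable (psiR h) :=
  (psiE_meas hhmeas).ennreal_toReal

lemma lin_ofReal_alpha (hhnn : ∀ t, 0 ≤ h t) (hhint : IntegrableOn h (Set.Ioi 0))
    (hα : α = ∫ t in Set.Ioi (0:ℝ), h t) :
    ∫⁻ s in Set.Ioi (0:ℝ), ENNReal.ofReal (h s) = ENNReal.ofReal α := by
  rw [hα, ofReal_integral_eq_lintegral_ofReal hhint
    (Filter.Eventually.of_forall fun s => hhnn s)]

set_option maxHeartbeats 1000000 in
lemma lin_step (hhmeas : Measurable h) (hhnn : ∀ t, 0 ≤ h t)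
    (hhbdd : ∀ t, h t ≤ C) (hhint : IntegrableOn h (Set.Ioi 0))
    (hα : α = ∫ t in Set.Ioi (0:ℝ), h t) (hC : 0 ≤ C) (hα0 : 0 ≤ α) (n : ℕ) :
    (∫⁻ u in Set.Ioi (0:ℝ), ENNReal.ofReal (convPow h (n+1) u))
      = (∫⁻ u in Set.Ioi (0:ℝ), ENNReal.ofReal (convPow h n u)) * ENNReal.ofReal α := by
  set A : Set (ℝ × ℝ) := {p : ℝ × ℝ | 0 < p.2 ∧ p.2 ≤ p.1} with hAdef
  have hA : MeasurableSet A :=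
    (measurableSet_lt measurable_const measurable_snd).inter
      (measurableSet_le measurable_snd measurable_fst)
  set k : ℝ × ℝ → ℝ≥0∞ :=
    fun p => ENNReal.ofReal (convPow h n (p.1 - p.2)) * ENNReal.ofReal (h p.2) with hkdef
  have hk : Measurable k :=
    (((meas_convPow hhmeas n).comp (measurable_fst.sub measurable_snd)).ennreal_ofReal).mul
      ((hhmeas.comp measurable_snd).ennreal_ofReal)
  -- step 1: pointwise identity on Ioi 0
  have hof : ∀ u ∈ Set.Ioi (0:ℝ), ENNReal.ofReal (convPow h (n+1) u)
      = ∫⁻ s, A.indicator k (u, s) := by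
    intro u hu
    have hu0 : (0:ℝ) < u := hu
    have hIoc : IntegrableOn h (Set.Ioc 0 u) := hhint.mono_set Set.Ioc_subset_Ioi_self
    have hint : IntegrableOn (fun s => convPow h n (u - s) * h s) (Set.Ioc 0 u) := by
      refine Integrable.bdd_mul (c := C * α ^ n) hIoc
        (((meas_convPow hhmeas n).comp (measurable_const.sub measurable_id)).aestronglyMeasurable) ?_
      refine (ae_restrict_iff' measurableSet_Ioc).2 (Filter.Eventually.of_forall fun s hs => ?_)
      have h1 : 0 ≤ u - s := by linarith [hs.2]
      have := convPow_bound hhmeas hhnn hhbdd hhint hα hC hα0 n (u - s) h1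
      rw [Real.norm_eq_abs, abs_of_nonneg this.1]; exact this.2
    have h1 : convPow h (n+1) u = ∫ s in Set.Ioc 0 u, convPow h n (u - s) * h s := by
      show conv _ _ u = _
      rw [conv, intervalIntegral.integral_of_le hu0.le]
    rw [h1, ofReal_integral_eq_lintegral_ofReal hint ?nn]
    case nn =>
      refine (ae_restrict_iff' measurableSet_Ioc).2 (Filter.Eventually.of_forall fun s hs => ?_)
      exact mul_nonneg (convPow_bound hhmeas hhnn hhbdd hhint hα hC hα0 n (u - s)
        (by linarith [hs.2])).1 (hhnn s)
    rw [← lintegral_indicator measurableSet_Ioc]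
    refine lintegral_congr fun s => ?_
    by_cases hs : s ∈ Set.Ioc 0 u
    · rw [Set.indicator_of_mem hs]
      have hmem : (u, s) ∈ A := ⟨hs.1, hs.2⟩
      rw [Set.indicator_of_mem hmem, hkdef]
      exact ENNReal.ofReal_mul (convPow_bound hhmeas hhnn hhbdd hhint hα hC hα0 n (u - s)
        (by linarith [hs.2])).1
    · rw [Set.indicator_of_notMem hs, Set.indicator_of_notMem (by exact hs)]
  calc ∫⁻ u in Set.Ioi (0:ℝ), ENNReal.ofReal (convPow h (n+1) u)
      = ∫⁻ u in Set.Ioi (0:ℝ), ∫⁻ s, A.indicator k (u, s) :=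
        setLIntegral_congr_fun measurableSet_Ioi hof
    _ = ∫⁻ s, ∫⁻ u in Set.Ioi (0:ℝ), A.indicator k (u, s) := by
        refine lintegral_lintegral_swap ?_
        exact ((hk.indicator hA).comp measurable_id).aemeasurable
    _ = ∫⁻ s, (Set.Ioi (0:ℝ)).indicator
          (fun s => (∫⁻ u in Set.Ioi (0:ℝ), ENNReal.ofReal (convPow h n u)) * ENNReal.ofReal (h s)) s := by
        refine lintegral_congr fun s => ?_
        by_cases hs : (0:ℝ) < s
        · rw [Set.indicator_of_mem (Set.mem_Ioi.2 hs)]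
          have hind : ∀ u, A.indicator k (u, s)
              = (Set.Ici s).indicator (fun u => ENNReal.ofReal (convPow h n (u - s))) u
                  * ENNReal.ofReal (h s) := by
            intro u
            by_cases hus : s ≤ u
            · rw [Set.indicator_of_mem (show (u,s) ∈ A from ⟨hs, hus⟩),
                Set.indicator_of_mem (Set.mem_Ici.2 hus)]
            · have h1 : (u, s) ∉ A := fun hc => hus hc.2
              have h2 : u ∉ Set.Ici s := fun hc => hus hc
              rw [Set.indicator_of_notMem h1, Set.indicator_of_notMem h2, zero_mul]
          simp only [hind]
          have hmeasg : Measurable fun u : ℝ => ENNReal.ofReal (convPow h n (u - s)) :=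
            ((meas_convPow hhmeas n).comp (measurable_id.sub measurable_const)).ennreal_ofReal
          rw [lintegral_mul_const _ (hmeasg.indicator measurableSet_Ici)]
          congr 1
          rw [lintegral_indicator measurableSet_Ici, Measure.restrict_restrict measurableSet_Ici]
          have : Set.Ici s ∩ Set.Ioi (0:ℝ) = Set.Ici s :=
            Set.inter_eq_left.2 fun x hx => lt_of_lt_of_le hs hx
          rw [this]
          -- translation invariance
          have htrans : ∫⁻ u in Set.Ici s, ENNReal.ofReal (convPow h n (u - s))
              = ∫⁻ u in Set.Ici (0:ℝ), ENNReal.ofReal (convPow h n u) := by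
            rw [← lintegral_indicator measurableSet_Ici, ← lintegral_indicator measurableSet_Ici]
            have heq : ∀ u : ℝ, (Set.Ici s).indicator
                (fun u => ENNReal.ofReal (convPow h n (u - s))) u
                = (Set.Ici (0:ℝ)).indicator (fun w => ENNReal.ofReal (convPow h n w)) (u + -s) := by
              intro u
              by_cases hus : s ≤ u
              · have h1 : u ∈ Set.Ici s := Set.mem_Ici.2 hus
                have h2 : u + -s ∈ Set.Ici (0:ℝ) := Set.mem_Ici.2 (by linarith)
                rw [Set.indicator_of_mem h1, Set.indicator_of_mem h2, sub_eq_add_neg]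
              · have h1 : u ∉ Set.Ici s := fun hc => hus (Set.mem_Ici.1 hc)
                have h2 : u + -s ∉ Set.Ici (0:ℝ) := fun hc => hus (by
                  have := Set.mem_Ici.1 hc; linarith)
                rw [Set.indicator_of_notMem h1, Set.indicator_of_notMem h2]
            simp only [heq]
            exact lintegral_add_right_eq_self
              ((Set.Ici (0:ℝ)).indicator fun w => ENNReal.ofReal (convPow h n w)) (-s)
          rw [htrans]
          exact setLIntegral_congr (MeasureTheory.Ioi_ae_eq_Ici (a := (0:ℝ))).symm
        · have h1 : s ∉ Set.Ioi (0:ℝ) := fun hc => hs (Set.mem_Ioi.1 hc)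
          rw [Set.indicator_of_notMem h1]
          have : ∀ u, A.indicator k (u, s) = 0 := fun u =>
            Set.indicator_of_notMem (fun hc => hs hc.1) _
          simp only [this, lintegral_zero]
    _ = ∫⁻ s in Set.Ioi (0:ℝ),
          (∫⁻ u in Set.Ioi (0:ℝ), ENNReal.ofReal (convPow h n u)) * ENNReal.ofReal (h s) := by
        rw [lintegral_indicator measurableSet_Ioi]
    _ = (∫⁻ u in Set.Ioi (0:ℝ), ENNReal.ofReal (convPow h n u))
          * ∫⁻ s in Set.Ioi (0:ℝ), ENNReal.ofReal (h s) := by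
        rw [lintegral_const_mul _ hhmeas.ennreal_ofReal]
    _ = (∫⁻ u in Set.Ioi (0:ℝ), ENNReal.ofReal (convPow h n u)) * ENNReal.ofReal α := by
        rw [lin_ofReal_alpha hhnn hhint hα]

end aux3

section aux4
open MeasureTheory Filter intervalIntegral
open scoped ENNReal
variable {h : ℝ → ℝ} {C α : ℝ}

lemma lin_convPow (hhmeas : Measurable h) (hhnn : ∀ t, 0 ≤ h t)
    (hhbdd : ∀ t, h t ≤ C) (hhint : IntegrableOn h (Set.Ioi 0))
    (hα : α = ∫ t in Set.Ioi (0:ℝ), h t) (hC : 0 ≤ C) (hα0 : 0 ≤ α) :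
    ∀ n, (∫⁻ u in Set.Ioi (0:ℝ), ENNReal.ofReal (convPow h n u))
      = (ENNReal.ofReal α) ^ (n + 1) := by
  intro n
  induction n with
  | zero => rw [pow_one]; exact lin_ofReal_alpha hhnn hhint hα
  | succ n ih =>
      rw [lin_step hhmeas hhnn hhbdd hhint hα hC hα0 n, ih, ← pow_succ]

lemma lin_psiE (hhmeas : Measurable h) (hhnn : ∀ t, 0 ≤ h t)
    (hhbdd : ∀ t, h t ≤ C) (hhint : IntegrableOn h (Set.Ioi 0))
    (hα : α = ∫ t in Set.Ioi (0:ℝ), h t) (hC : 0 ≤ C) (hα0 : 0 ≤ α) (hα1 : α < 1) :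
    ∫⁻ x in Set.Ioi (0:ℝ), psiE h x = ENNReal.ofReal (α / (1 - α)) := by
  have : ∫⁻ x in Set.Ioi (0:ℝ), psiE h x
      = ∑' n : ℕ, ∫⁻ u in Set.Ioi (0:ℝ), ENNReal.ofReal (convPow h n u) := by
    unfold psiE
    exact lintegral_tsum fun n => ((meas_convPow hhmeas n).ennreal_ofReal).aemeasurable
  rw [this]
  have h2 : ∀ n : ℕ, (∫⁻ u in Set.Ioi (0:ℝ), ENNReal.ofReal (convPow h n u))
      = (ENNReal.ofReal α) ^ (n+1) := lin_convPow hhmeas hhnn hhbdd hhint hα hC hα0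
  simp only [h2, pow_succ, mul_comm]
  rw [ENNReal.tsum_mul_left, ENNReal.tsum_geometric]
  have h3 : (1 : ℝ≥0∞) - ENNReal.ofReal α = ENNReal.ofReal (1 - α) := by
    rw [← ENNReal.ofReal_one, ← ENNReal.ofReal_sub _ hα0]
  rw [h3, ENNReal.ofReal_div_of_pos (by linarith), div_eq_mul_inv, mul_comm]

lemma psi_summable (hhmeas : Measurable h) (hhnn : ∀ t, 0 ≤ h t)
    (hhbdd : ∀ t, h t ≤ C) (hhint : IntegrableOn h (Set.Ioi 0))
    (hα : α = ∫ t in Set.Ioi (0:ℝ), h t) (hC : 0 ≤ C) (hα0 : 0 ≤ α) (hα1 : α < 1)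
    {x : ℝ} (hx : 0 ≤ x) : Summable fun n => convPow h n x := by
  refine Summable.of_nonneg_of_le
    (fun n => (convPow_bound hhmeas hhnn hhbdd hhint hα hC hα0 n x hx).1)
    (fun n => (convPow_bound hhmeas hhnn hhbdd hhint hα hC hα0 n x hx).2) ?_
  exact (summable_geometric_of_lt_one hα0 hα1).mul_left C

lemma psiR_eq_tsum (hhmeas : Measurable h) (hhnn : ∀ t, 0 ≤ h t)
    (hhbdd : ∀ t, h t ≤ C) (hhint : IntegrableOn h (Set.Ioi 0))
    (hα : α = ∫ t in Set.Ioi (0:ℝ), h t) (hC : 0 ≤ C) (hα0 : 0 ≤ α) (hα1 : α < 1)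
    {x : ℝ} (hx : 0 ≤ x) :
    psiE h x = ENNReal.ofReal (∑' n : ℕ, convPow h n x)
      ∧ psiR h x = ∑' n : ℕ, convPow h n x
      ∧ psiR h x ≤ C / (1 - α) := by
  have hsum := psi_summable hhmeas hhnn hhbdd hhint hα hC hα0 hα1 hx
  have h1 : psiE h x = ENNReal.ofReal (∑' n : ℕ, convPow h n x) :=
    (ENNReal.ofReal_tsum_of_nonneg
      (fun n => (convPow_bound hhmeas hhnn hhbdd hhint hα hC hα0 n x hx).1) hsum).symm
  have h2 : psiR h x = ∑' n : ℕ, convPow h n x := by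
    rw [psiR, h1, ENNReal.toReal_ofReal (tsum_nonneg
      (fun n => (convPow_bound hhmeas hhnn hhbdd hhint hα hC hα0 n x hx).1))]
  refine ⟨h1, h2, ?_⟩
  rw [h2]
  calc ∑' n : ℕ, convPow h n x ≤ ∑' n : ℕ, C * α ^ n :=
        hsum.tsum_le_tsum (fun n => (convPow_bound hhmeas hhnn hhbdd hhint hα hC hα0 n x hx).2)
          ((summable_geometric_of_lt_one hα0 hα1).mul_left C)
    _ = C * (1 - α)⁻¹ := by
        rw [tsum_mul_left, tsum_geometric_of_lt_one hα0 hα1]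
    _ = C / (1 - α) := by rw [div_eq_mul_inv]

lemma psi_tail (hhmeas : Measurable h) (hhnn : ∀ t, 0 ≤ h t)
    (hhbdd : ∀ t, h t ≤ C) (hhint : IntegrableOn h (Set.Ioi 0))
    (hα : α = ∫ t in Set.Ioi (0:ℝ), h t) (hC : 0 ≤ C) (hα0 : 0 ≤ α) (hα1 : α < 1)
    {ε : ℝ} (hε : 0 < ε) :
    ∃ A : ℝ, 0 < A ∧ ∫⁻ x in Set.Ioi A, psiE h x ≤ ENNReal.ofReal ε := by
  set ν := volume.withDensity (psiE h) with hν
  have happ : ∀ B : ℝ, ∫⁻ x in Set.Ioi B, psiE h x = ν (Set.Ioi B) := fun B =>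
    (withDensity_apply _ measurableSet_Ioi).symm
  have hfin : ν (Set.Ioi (0:ℝ)) ≠ ⊤ := by
    rw [← happ, lin_psiE hhmeas hhnn hhbdd hhint hα hC hα0 hα1]
    exact ENNReal.ofReal_ne_top
  have htend : Tendsto (fun n : ℕ => ν (Set.Ioi ((n : ℝ) + 1))) atTop
      (nhds (ν (⋂ n : ℕ, Set.Ioi ((n : ℝ) + 1)))) := by
    refine tendsto_measure_iInter_atTop (fun n => measurableSet_Ioi.nullMeasurableSet)
      (fun i j hij => Set.Ioi_subset_Ioi (by
        have : (i:ℝ) ≤ (j:ℝ) := Nat.cast_le.2 hij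
        linarith)) ?_
    exact ⟨0, ne_top_of_le_ne_top hfin (measure_mono (Set.Ioi_subset_Ioi (by norm_num)))⟩
  have hempty : (⋂ n : ℕ, Set.Ioi ((n : ℝ) + 1)) = ∅ := by
    ext x
    simp only [Set.mem_iInter, Set.mem_Ioi, Set.mem_empty_iff_false, iff_false, not_forall, not_lt]
    obtain ⟨n, hn⟩ := exists_nat_gt x
    exact ⟨n, by linarith⟩
  rw [hempty, measure_empty] at htend
  have := htend.eventually_lt_const (ENNReal.ofReal_pos.2 hε)
  obtain ⟨n, hn⟩ := this.exists
  exact ⟨(n : ℝ) + 1, by positivity, by rw [happ]; exact hn.le⟩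

end aux4

section aux5
open MeasureTheory Filter intervalIntegral
open scoped ENNReal
variable {h : ℝ → ℝ} {C α : ℝ}

lemma psi_fin_Ioi (hhmeas : Measurable h) (hhnn : ∀ t, 0 ≤ h t)
    (hhbdd : ∀ t, h t ≤ C) (hhint : IntegrableOn h (Set.Ioi 0))
    (hα : α = ∫ t in Set.Ioi (0:ℝ), h t) (hC : 0 ≤ C) (hα0 : 0 ≤ α) (hα1 : α < 1)
    {t : ℝ} (ht : 0 ≤ t) : ∫⁻ x in Set.Ioi t, psiE h x ≠ ⊤ := by
  refine ne_top_of_le_ne_top ?_ (lintegral_mono_set (Set.Ioi_subset_Ioi ht))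
  rw [lin_psiE hhmeas hhnn hhbdd hhint hα hC hα0 hα1]
  exact ENNReal.ofReal_ne_top

lemma psi_fin_Ioc (hhmeas : Measurable h) (hhnn : ∀ t, 0 ≤ h t)
    (hhbdd : ∀ t, h t ≤ C) (hhint : IntegrableOn h (Set.Ioi 0))
    (hα : α = ∫ t in Set.Ioi (0:ℝ), h t) (hC : 0 ≤ C) (hα0 : 0 ≤ α) (hα1 : α < 1)
    (t : ℝ) : ∫⁻ x in Set.Ioc 0 t, psiE h x ≠ ⊤ := by
  refine ne_top_of_le_ne_top ?_ (lintegral_mono_set Set.Ioc_subset_Ioi_self)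
  rw [lin_psiE hhmeas hhnn hhbdd hhint hα hC hα0 hα1]
  exact ENNReal.ofReal_ne_top

lemma psi_interval_eq (hhmeas : Measurable h) (hhnn : ∀ t, 0 ≤ h t)
    (hhbdd : ∀ t, h t ≤ C) (hhint : IntegrableOn h (Set.Ioi 0))
    (hα : α = ∫ t in Set.Ioi (0:ℝ), h t) (hC : 0 ≤ C) (hα0 : 0 ≤ α) (hα1 : α < 1)
    {t : ℝ} (ht : 0 ≤ t) :
    ∫ s in (0:ℝ)..t, psiR h s = (∫⁻ x in Set.Ioc 0 t, psiE h x).toReal := by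
  rw [intervalIntegral.integral_of_le ht]
  refine integral_toReal ((psiE_meas hhmeas).aemeasurable) ?_
  refine (ae_restrict_iff' measurableSet_Ioc).2 (Filter.Eventually.of_forall fun x hx => ?_)
  rw [(psiR_eq_tsum hhmeas hhnn hhbdd hhint hα hC hα0 hα1 hx.1.le).1]
  exact ENNReal.ofReal_lt_top

lemma psi_split (hhmeas : Measurable h) (hhnn : ∀ t, 0 ≤ h t)
    (hhbdd : ∀ t, h t ≤ C) (hhint : IntegrableOn h (Set.Ioi 0))
    (hα : α = ∫ t in Set.Ioi (0:ℝ), h t) (hC : 0 ≤ C) (hα0 : 0 ≤ α) (hα1 : α < 1)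
    {t : ℝ} (ht : 0 ≤ t) :
    (∫ s in (0:ℝ)..t, psiR h s) + (∫⁻ x in Set.Ioi t, psiE h x).toReal = α / (1 - α) := by
  have hunion : Set.Ioc 0 t ∪ Set.Ioi t = Set.Ioi (0:ℝ) := Set.Ioc_union_Ioi_eq_Ioi ht
  have hdisj : Disjoint (Set.Ioc (0:ℝ) t) (Set.Ioi t) := by
    refine Set.disjoint_left.2 fun x hx1 hx2 => ?_
    exact absurd hx1.2 (not_le.2 hx2)
  have hsum : (∫⁻ x in Set.Ioc 0 t, psiE h x) + (∫⁻ x in Set.Ioi t, psiE h x)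
      = ENNReal.ofReal (α / (1 - α)) := by
    rw [← lintegral_union measurableSet_Ioi hdisj, hunion,
      lin_psiE hhmeas hhnn hhbdd hhint hα hC hα0 hα1]
  rw [psi_interval_eq hhmeas hhnn hhbdd hhint hα hC hα0 hα1 ht]
  rw [← ENNReal.toReal_add (psi_fin_Ioc hhmeas hhnn hhbdd hhint hα hC hα0 hα1 t)
      (psi_fin_Ioi hhmeas hhnn hhbdd hhint hα hC hα0 hα1 ht), hsum,
    ENNReal.toReal_ofReal (div_nonneg hα0 (by linarith))]

end aux5

section aux6
open MeasureTheory Filter intervalIntegral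
open scoped ENNReal

lemma phi_fin (μ Φ₂ : Measure ℝ) [IsFiniteMeasure Φ₂] (φ₁ : ℝ → ℝ) (C₁ : ℝ)
    (hφmeas : Measurable φ₁) (hφbdd : ∀ t, φ₁ t ≤ C₁)
    (hStone : μ = (volume.restrict (Set.Ici (0:ℝ))).withDensity
      (fun t => ENNReal.ofReal (φ₁ t)) + Φ₂) :
    ∀ t : ℝ, μ (Set.Icc 0 t) ≠ ⊤ := by
  intro t
  rw [hStone]
  simp only [Measure.coe_add, Pi.add_apply]
  refine ENNReal.add_ne_top.2 ⟨?_, measure_ne_top Φ₂ _⟩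
  rw [withDensity_apply _ measurableSet_Icc, Measure.restrict_restrict measurableSet_Icc]
  refine ne_top_of_le_ne_top ?_ (lintegral_mono fun x => ENNReal.ofReal_le_ofReal (hφbdd x))
  rw [setLIntegral_const]
  refine ENNReal.mul_ne_top ENNReal.ofReal_ne_top (ne_top_of_le_ne_top ?_
    (measure_mono Set.inter_subset_left))
  rw [Real.volume_Icc]
  exact ENNReal.ofReal_ne_top

lemma phi_int (φ₁ : ℝ → ℝ) (C₁ : ℝ) (hφmeas : Measurable φ₁) (hφnn : ∀ t, 0 ≤ φ₁ t)
    (hφbdd : ∀ t, φ₁ t ≤ C₁) {s : Set ℝ} (hs : volume s ≠ ⊤) :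
    IntegrableOn φ₁ s := by
  refine Measure.integrableOn_of_bounded hs hφmeas.aestronglyMeasurable
    (M := C₁) (Filter.Eventually.of_forall fun a => ?_)
  rw [Real.norm_eq_abs, abs_of_nonneg (hφnn a)]
  exact hφbdd a

lemma phi_eq (μ Φ₂ : Measure ℝ) [IsFiniteMeasure Φ₂] (φ₁ : ℝ → ℝ) (C₁ : ℝ)
    (hφmeas : Measurable φ₁) (hφnn : ∀ t, 0 ≤ φ₁ t) (hφbdd : ∀ t, φ₁ t ≤ C₁)
    (hStone : μ = (volume.restrict (Set.Ici (0:ℝ))).withDensity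
      (fun t => ENNReal.ofReal (φ₁ t)) + Φ₂) (t : ℝ) :
    (μ (Set.Icc 0 t)).toReal = (∫ s in Set.Icc (0:ℝ) t, φ₁ s) + (Φ₂ (Set.Icc 0 t)).toReal := by
  have hIcc : Set.Icc (0:ℝ) t ∩ Set.Ici 0 = Set.Icc 0 t :=
    Set.inter_eq_left.2 fun x hx => hx.1
  have hvol : volume (Set.Icc (0:ℝ) t) ≠ ⊤ := by
    rw [Real.volume_Icc]; exact ENNReal.ofReal_ne_top
  rw [hStone]
  simp only [Measure.coe_add, Pi.add_apply]
  rw [withDensity_apply _ measurableSet_Icc, Measure.restrict_restrict measurableSet_Icc, hIcc,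
    ← ofReal_integral_eq_lintegral_ofReal (phi_int φ₁ C₁ hφmeas hφnn hφbdd hvol)
      (Filter.Eventually.of_forall fun x => hφnn x),
    ENNReal.toReal_add ENNReal.ofReal_ne_top (measure_ne_top Φ₂ _),
    ENNReal.toReal_ofReal (setIntegral_nonneg measurableSet_Icc fun x _ => hφnn x)]

lemma phi_est (μ Φ₂ : Measure ℝ) [IsFiniteMeasure Φ₂] (φ₁ : ℝ → ℝ) (m C₁ : ℝ) (hm : 0 < m)
    (hφmeas : Measurable φ₁) (hφnn : ∀ t, 0 ≤ φ₁ t) (hφbdd : ∀ t, φ₁ t ≤ C₁)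
    (hφlim : Filter.Tendsto φ₁ Filter.atTop (nhds m))
    (hStone : μ = (volume.restrict (Set.Ici (0:ℝ))).withDensity
      (fun t => ENNReal.ofReal (φ₁ t)) + Φ₂) :
    ∀ ε > 0, ∃ K, 0 ≤ K ∧ ∀ t, 0 ≤ t → |(μ (Set.Icc 0 t)).toReal - m * t| ≤ ε * t + K := by
  intro ε hε
  have hC₁ : 0 ≤ C₁ := le_trans (hφnn 0) (hφbdd 0)
  obtain ⟨N, hN⟩ := Metric.tendsto_atTop.1 hφlim ε hε
  set A := max N 0 with hA
  have hA0 : 0 ≤ A := le_max_right _ _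
  refine ⟨(C₁ + m) * A + (Φ₂ Set.univ).toReal, by positivity, fun t ht => ?_⟩
  have habs : ∀ s : ℝ, |φ₁ s - m| ≤ C₁ + m := fun s =>
    abs_le.2 ⟨by linarith [hφnn s, hφbdd s], by linarith [hφnn s, hφbdd s]⟩
  have habsA : ∀ s : ℝ, A ≤ s → |φ₁ s - m| ≤ ε := fun s hs => by
    have := hN s (le_trans (le_max_left _ _) hs)
    rw [Real.dist_eq] at this
    exact this.le
  have hvol : ∀ u : ℝ, volume (Set.Icc (0:ℝ) u) ≠ ⊤ := fun u => by
    rw [Real.volume_Icc]; exact ENNReal.ofReal_ne_top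
  have hintφ : ∀ u : ℝ, IntegrableOn φ₁ (Set.Icc 0 u) :=
    fun u => phi_int φ₁ C₁ hφmeas hφnn hφbdd (hvol u)
  -- integral of the constant m
  have hconst : ∀ u : ℝ, 0 ≤ u → ∫ _ in Set.Icc (0:ℝ) u, m = m * u := by
    intro u hu
    rw [setIntegral_const, Real.volume_real_Icc_of_le hu, smul_eq_mul,
      sub_zero, mul_comm]
  have hsubint : ∀ u : ℝ, IntegrableOn (fun s => φ₁ s - m) (Set.Icc 0 u) := fun u =>
    (hintφ u).sub (integrableOn_const (hvol u))
  have hcore : |(∫ s in Set.Icc (0:ℝ) t, φ₁ s) - m * t| ≤ ε * t + (C₁ + m) * A := by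
    rw [← hconst t ht, ← integral_sub (hintφ t)
      (integrableOn_const (hvol t))]
    have h1 : |∫ s in Set.Icc (0:ℝ) t, (φ₁ s - m)| ≤ ∫ s in Set.Icc (0:ℝ) t, |φ₁ s - m| := by
      simpa [Real.norm_eq_abs] using
        MeasureTheory.norm_integral_le_integral_norm (μ := volume.restrict (Set.Icc (0:ℝ) t))
          (fun s => φ₁ s - m)
    refine le_trans h1 ?_
    have hconst_int : ∀ (u : ℝ) (c : ℝ), IntegrableOn (fun _ => c) (Set.Icc (0:ℝ) u) := fun u c =>
      integrableOn_const (hvol u)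
    rcases le_or_gt t A with hcase | hcase
    · calc ∫ s in Set.Icc (0:ℝ) t, |φ₁ s - m|
          ≤ ∫ _ in Set.Icc (0:ℝ) t, (C₁ + m) :=
            setIntegral_mono_on (hsubint t).abs (hconst_int t _) measurableSet_Icc
              fun s _ => habs s
        _ = (C₁ + m) * t := by
            rw [setIntegral_const, Real.volume_real_Icc_of_le ht,
              smul_eq_mul, sub_zero, mul_comm]
        _ ≤ ε * t + (C₁ + m) * A := by nlinarith
    · have hsplit : Set.Icc (0:ℝ) t = Set.Icc 0 A ∪ Set.Ioc A t :=
        (Set.Icc_union_Ioc_eq_Icc hA0 hcase.le).symm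
      have hdisj : Disjoint (Set.Icc (0:ℝ) A) (Set.Ioc A t) :=
        Set.disjoint_left.2 fun x hx1 hx2 => absurd hx1.2 (not_le.2 hx2.1)
      rw [hsplit, setIntegral_union hdisj measurableSet_Ioc
        ((hsubint A).abs) (IntegrableOn.mono_set ((hsubint t).abs) (by rw [hsplit]; exact Set.subset_union_right))]
      have hp1 : ∫ s in Set.Icc (0:ℝ) A, |φ₁ s - m| ≤ (C₁ + m) * A := by
        calc ∫ s in Set.Icc (0:ℝ) A, |φ₁ s - m|
            ≤ ∫ _ in Set.Icc (0:ℝ) A, (C₁ + m) :=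
              setIntegral_mono_on (hsubint A).abs (hconst_int A _) measurableSet_Icc
                fun s _ => habs s
          _ = (C₁ + m) * A := by
              rw [setIntegral_const, Real.volume_real_Icc_of_le hA0,
                smul_eq_mul, sub_zero, mul_comm]
      have hp2 : ∫ s in Set.Ioc A t, |φ₁ s - m| ≤ ε * t := by
        have hioc : IntegrableOn (fun s => |φ₁ s - m|) (Set.Ioc A t) :=
          IntegrableOn.mono_set ((hsubint t).abs) (by rw [hsplit]; exact Set.subset_union_right)
        have hioc_const : IntegrableOn (fun _ => ε) (Set.Ioc A t) := by
          refine integrableOn_const ?_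
          rw [Real.volume_Ioc]; exact ENNReal.ofReal_ne_top
        calc ∫ s in Set.Ioc A t, |φ₁ s - m|
            ≤ ∫ _ in Set.Ioc A t, ε :=
              setIntegral_mono_on hioc hioc_const measurableSet_Ioc fun s hs => habsA s hs.1.le
          _ = ε * (t - A) := by
              rw [setIntegral_const, Real.volume_real_Ioc_of_le hcase.le,
                smul_eq_mul, mul_comm]
          _ ≤ ε * t := by nlinarith
      linarith
  have hΦeq := phi_eq μ Φ₂ φ₁ C₁ hφmeas hφnn hφbdd hStone t
  have hboundΦ₂ : (Φ₂ (Set.Icc 0 t)).toReal ≤ (Φ₂ Set.univ).toReal :=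
    ENNReal.toReal_mono (measure_ne_top _ _) (measure_mono (Set.subset_univ _))
  have hΦ₂nn : 0 ≤ (Φ₂ (Set.Icc 0 t)).toReal := ENNReal.toReal_nonneg
  rw [hΦeq]
  have := abs_add_le ((∫ s in Set.Icc (0:ℝ) t, φ₁ s) - m * t) ((Φ₂ (Set.Icc 0 t)).toReal)
  calc |(∫ s in Set.Icc (0:ℝ) t, φ₁ s) + (Φ₂ (Set.Icc 0 t)).toReal - m * t|
      ≤ |(∫ s in Set.Icc (0:ℝ) t, φ₁ s) - m * t| + |(Φ₂ (Set.Icc 0 t)).toReal| := by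
        have heq : (∫ s in Set.Icc (0:ℝ) t, φ₁ s) + (Φ₂ (Set.Icc 0 t)).toReal - m * t
            = ((∫ s in Set.Icc (0:ℝ) t, φ₁ s) - m * t) + (Φ₂ (Set.Icc 0 t)).toReal := by ring
        rw [heq]; exact abs_add_le _ _
    _ ≤ (ε * t + (C₁ + m) * A) + (Φ₂ Set.univ).toReal := by
        rw [abs_of_nonneg hΦ₂nn]; exact add_le_add hcore hboundΦ₂
    _ = ε * t + ((C₁ + m) * A + (Φ₂ Set.univ).toReal) := by ring

end aux6

section aux7
open MeasureTheory Filter intervalIntegral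
open scoped ENNReal

set_option maxHeartbeats 1600000 in
lemma key_est {h : ℝ → ℝ} {C α : ℝ}
    (hhmeas : Measurable h) (hhnn : ∀ t, 0 ≤ h t)
    (hhbdd : ∀ t, h t ≤ C) (hhint : IntegrableOn h (Set.Ioi 0))
    (hα : α = ∫ t in Set.Ioi (0:ℝ), h t) (hC : 0 ≤ C) (hα0 : 0 ≤ α) (hα1 : α < 1)
    {m : ℝ} (hm : 0 < m) (Φb : ℝ → ℝ)
    (hΦmeas : Measurable Φb) (hΦnn : ∀ t, 0 ≤ Φb t) (hΦmono : Monotone Φb)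
    (hΦest : ∀ ε > 0, ∃ K, 0 ≤ K ∧ ∀ t, 0 ≤ t → |Φb t - m * t| ≤ ε * t + K) :
    ∀ ε > 0, ∃ K, 0 ≤ K ∧ ∀ t, 0 ≤ t →
      |Φb t + (∫ s in (0:ℝ)..t, psiR h (t - s) * Φb s) - (m / (1 - α)) * t|
        ≤ ε * t + K := by
  have h1α : 0 < 1 - α := by linarith
  set S := α / (1 - α) with hSdef
  have hS0 : 0 ≤ S := div_nonneg hα0 h1α.le
  set B := C / (1 - α) with hBdef
  have hB0 : 0 ≤ B := div_nonneg hC h1α.le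
  have hψnn : ∀ x, 0 ≤ psiR h x := fun x => ENNReal.toReal_nonneg
  have hψB : ∀ x, 0 ≤ x → psiR h x ≤ B := fun x hx =>
    (psiR_eq_tsum hhmeas hhnn hhbdd hhint hα hC hα0 hα1 hx).2.2
  have hψmeas : Measurable (psiR h) := psiR_meas hhmeas
  -- generic interval integrability from boundedness on (0, u]
  have hII : ∀ (g : ℝ → ℝ) (u M : ℝ), 0 ≤ u → Measurable g →
      (∀ x ∈ Set.Ioc (0:ℝ) u, |g x| ≤ M) → IntervalIntegrable g volume 0 u := by
    intro g u M hu hg hb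
    rw [intervalIntegrable_iff_integrableOn_Ioc_of_le hu]
    refine Measure.integrableOn_of_bounded (M := M) ?_ hg.aestronglyMeasurable ?_
    · rw [Real.volume_Ioc]; exact ENNReal.ofReal_ne_top
    · exact (ae_restrict_iff' measurableSet_Ioc).2 (Filter.Eventually.of_forall fun x hx => by
        rw [Real.norm_eq_abs]; exact hb x hx)
  have hψII : ∀ u : ℝ, 0 ≤ u → IntervalIntegrable (psiR h) volume 0 u := fun u hu =>
    hII (psiR h) u B hu hψmeas fun x hx => by
      rw [abs_of_nonneg (hψnn x)]; exact hψB x hx.1.le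
  -- P and tail
  set P : ℝ → ℝ := fun u => ∫ s in (0:ℝ)..u, psiR h s with hPdef
  set tailR : ℝ → ℝ := fun u => (∫⁻ x in Set.Ioi u, psiE h x).toReal with htaildef
  have hPsplit : ∀ u : ℝ, 0 ≤ u → P u + tailR u = S := fun u hu =>
    psi_split hhmeas hhnn hhbdd hhint hα hC hα0 hα1 hu
  have htailnn : ∀ u, 0 ≤ tailR u := fun u => ENNReal.toReal_nonneg
  have hPnn : ∀ u, 0 ≤ u → 0 ≤ P u := fun u hu =>
    intervalIntegral.integral_nonneg hu fun s _ => hψnn s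
  have hPleS : ∀ u : ℝ, 0 ≤ u → P u ≤ S := fun u hu => by
    have := hPsplit u hu; have := htailnn u; linarith
  have htailS : ∀ u : ℝ, 0 ≤ u → tailR u ≤ S := fun u hu => by
    have := hPsplit u hu; have := hPnn u hu; linarith
  -- main construction
  intro ε hε
  set ε₁ := ε / (2 * (1 + S)) with hε₁def
  have hε₁ : 0 < ε₁ := by positivity
  obtain ⟨K₁, hK₁0, hK₁⟩ := hΦest ε₁ hε₁
  set ε₂ := ε / (4 * (m + 1)) with hε₂def
  have hε₂ : 0 < ε₂ := by positivity
  obtain ⟨A, hA0, hAtail⟩ := psi_tail hhmeas hhnn hhbdd hhint hα hC hα0 hα1 hε₂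
  have htail_small : ∀ u : ℝ, A ≤ u → tailR u ≤ ε₂ := by
    intro u hu
    refine ENNReal.toReal_le_of_le_ofReal hε₂.le ?_
    exact le_trans (lintegral_mono_set (Set.Ioi_subset_Ioi hu)) hAtail
  refine ⟨K₁ * (1 + S) + 2 * m * A * S, by positivity, fun t ht => ?_⟩
  -- estimates for Φb
  have hΦbd : ∀ u ∈ Set.Icc (0:ℝ) t, |Φb (t - u) - m * (t - u)| ≤ ε₁ * t + K₁ := by
    intro u hu
    have h1 : 0 ≤ t - u := by linarith [hu.2]
    have := hK₁ (t - u) h1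
    have h2 : ε₁ * (t - u) ≤ ε₁ * t := by nlinarith [hu.1]
    linarith
  -- change of variables
  have hCoV : (∫ s in (0:ℝ)..t, psiR h (t - s) * Φb s)
      = ∫ u in (0:ℝ)..t, psiR h u * Φb (t - u) := by
    have := intervalIntegral.integral_comp_sub_left (a := 0) (b := t)
      (fun u => psiR h u * Φb (t - u)) t
    simpa [sub_sub_cancel, sub_self, sub_zero] using this
  -- integrability of the pieces on [0, t]
  have hΦub : ∀ x ∈ Set.Ioc (0:ℝ) t, |Φb (t - x)| ≤ Φb t := by
    intro x hx
    rw [abs_of_nonneg (hΦnn _)]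
    exact hΦmono (by linarith [hx.1, hx.2])
  have hI1int : IntervalIntegrable (fun u => psiR h u * (Φb (t - u) - m * (t - u)))
      volume 0 t := by
    refine hII _ t (B * (Φb t + m * t)) ht
      (hψmeas.mul ((hΦmeas.comp (measurable_const.sub measurable_id)).sub
        ((measurable_const.sub measurable_id).const_mul m))) ?_
    intro x hx
    rw [abs_mul, abs_of_nonneg (hψnn x)]
    refine mul_le_mul (hψB x hx.1.le) ?_ (abs_nonneg _) hB0
    calc |Φb (t - x) - m * (t - x)| ≤ |Φb (t - x)| + |m * (t - x)| := abs_sub _ _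
      _ ≤ Φb t + m * t := by
          refine add_le_add (hΦub x hx) ?_
          rw [abs_mul, abs_of_pos hm, abs_of_nonneg (by linarith [hx.1, hx.2] : (0:ℝ) ≤ t - x)]
          nlinarith [hx.1, hm]
  have hI2int : IntervalIntegrable (fun u => psiR h u * (m * (t - u))) volume 0 t := by
    refine hII _ t (B * (m * t)) ht
      (hψmeas.mul ((measurable_const.sub measurable_id).const_mul m)) ?_
    intro x hx
    rw [abs_mul, abs_of_nonneg (hψnn x)]
    refine mul_le_mul (hψB x hx.1.le) ?_ (abs_nonneg _) hB0
    rw [abs_mul, abs_of_pos hm, abs_of_nonneg (by linarith [hx.1, hx.2] : (0:ℝ) ≤ t - x)]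
    nlinarith [hx.1, hm]
  have hIsplit : (∫ u in (0:ℝ)..t, psiR h u * Φb (t - u))
      = (∫ u in (0:ℝ)..t, psiR h u * (Φb (t - u) - m * (t - u)))
        + ∫ u in (0:ℝ)..t, psiR h u * (m * (t - u)) := by
    rw [← intervalIntegral.integral_add hI1int hI2int]
    refine intervalIntegral.integral_congr fun u _ => by ring
  -- bound on I₁
  have hI1bd : |∫ u in (0:ℝ)..t, psiR h u * (Φb (t - u) - m * (t - u))|
      ≤ (ε₁ * t + K₁) * S := by
    have hM0 : 0 ≤ ε₁ * t + K₁ := by positivity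
    calc |∫ u in (0:ℝ)..t, psiR h u * (Φb (t - u) - m * (t - u))|
        ≤ ∫ u in (0:ℝ)..t, |psiR h u * (Φb (t - u) - m * (t - u))| :=
          intervalIntegral.abs_integral_le_integral_abs ht
      _ ≤ ∫ u in (0:ℝ)..t, psiR h u * (ε₁ * t + K₁) := by
          refine intervalIntegral.integral_mono_on ht hI1int.abs
            ((hψII t ht).mul_const _) fun u hu => ?_
          rw [abs_mul, abs_of_nonneg (hψnn u)]
          exact mul_le_mul_of_nonneg_left (hΦbd u hu) (hψnn u)
      _ = P t * (ε₁ * t + K₁) := intervalIntegral.integral_mul_const _ _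
      _ ≤ S * (ε₁ * t + K₁) := mul_le_mul_of_nonneg_right (hPleS t ht) hM0
      _ = (ε₁ * t + K₁) * S := mul_comm _ _
  -- bound on I₂
  set J := ∫ u in (0:ℝ)..t, psiR h u * (t - u) with hJdef
  have hJint : IntervalIntegrable (fun u => psiR h u * (t - u)) volume 0 t := by
    refine hII _ t (B * t) ht (hψmeas.mul (measurable_const.sub measurable_id)) ?_
    intro x hx
    rw [abs_mul, abs_of_nonneg (hψnn x), abs_of_nonneg (by linarith [hx.1, hx.2] : (0:ℝ) ≤ t - x)]
    refine mul_le_mul (hψB x hx.1.le) (by linarith [hx.1, hx.2]) (by linarith [hx.1, hx.2]) hB0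
  have hI2eq : (∫ u in (0:ℝ)..t, psiR h u * (m * (t - u))) = m * J := by
    rw [hJdef, ← intervalIntegral.integral_const_mul]
    refine intervalIntegral.integral_congr fun u _ => by ring
  have hJub : J ≤ S * t := by
    have h1 : J ≤ ∫ u in (0:ℝ)..t, psiR h u * t := by
      refine intervalIntegral.integral_mono_on ht hJint ((hψII t ht).mul_const _)
        fun u hu => mul_le_mul_of_nonneg_left (by linarith [hu.1]) (hψnn u)
    have h2 : (∫ u in (0:ℝ)..t, psiR h u * t) = P t * t :=
      intervalIntegral.integral_mul_const _ _
    have h3 : P t * t ≤ S * t := mul_le_mul_of_nonneg_right (hPleS t ht) ht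
    linarith
  have hJeq : J = t * P t - ∫ u in (0:ℝ)..t, psiR h u * u := by
    have h1 : (∫ u in (0:ℝ)..t, psiR h u * t) = P t * t :=
      intervalIntegral.integral_mul_const _ _
    have h2 : IntervalIntegrable (fun u => psiR h u * u) volume 0 t := by
      refine hII _ t (B * t) ht (hψmeas.mul measurable_id) ?_
      intro x hx
      rw [abs_mul, abs_of_nonneg (hψnn x), abs_of_nonneg (le_of_lt hx.1)]
      exact mul_le_mul (hψB x hx.1.le) hx.2 hx.1.le hB0
    have h3 : J = (∫ u in (0:ℝ)..t, psiR h u * t) - ∫ u in (0:ℝ)..t, psiR h u * u := by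
      rw [← intervalIntegral.integral_sub ((hψII t ht).mul_const _) h2]
      refine intervalIntegral.integral_congr fun u _ => by ring
    rw [h3, h1]; ring
  have hintu : IntervalIntegrable (fun u => psiR h u * u) volume 0 t := by
    refine hII _ t (B * t) ht (hψmeas.mul measurable_id) ?_
    intro x hx
    rw [abs_mul, abs_of_nonneg (hψnn x), abs_of_nonneg (le_of_lt hx.1)]
    exact mul_le_mul (hψB x hx.1.le) hx.2 hx.1.le hB0
  -- the key lower bound for J
  have hJlb : S * t - J ≤ 2 * ε₂ * t + 2 * A * S := by
    have hterm1 : t * (S - P t) ≤ ε₂ * t + A * S := by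
      rcases le_or_gt t A with hcase | hcase
      · have h1 : S - P t ≤ S := by have := hPnn t ht; linarith
        have : t * (S - P t) ≤ A * S := by nlinarith [hPsplit t ht, htailnn t]
        nlinarith [mul_nonneg hε₂.le ht]
      · have h1 : S - P t = tailR t := by have := hPsplit t ht; linarith
        have h2 : tailR t ≤ ε₂ := htail_small t hcase.le
        have : t * (S - P t) ≤ t * ε₂ := by
          rw [h1]; exact mul_le_mul_of_nonneg_left h2 ht
        nlinarith [mul_nonneg hA0.le hS0]
    have hterm2 : (∫ u in (0:ℝ)..t, psiR h u * u) ≤ ε₂ * t + A * S := by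
      rcases le_or_gt t A with hcase | hcase
      · have h1 : (∫ u in (0:ℝ)..t, psiR h u * u) ≤ ∫ u in (0:ℝ)..t, psiR h u * A := by
          refine intervalIntegral.integral_mono_on ht hintu ((hψII t ht).mul_const _)
            fun u hu => mul_le_mul_of_nonneg_left (by linarith [hu.2]) (hψnn u)
        have h2 : (∫ u in (0:ℝ)..t, psiR h u * A) = P t * A :=
          intervalIntegral.integral_mul_const _ _
        have h3 : P t * A ≤ S * A := mul_le_mul_of_nonneg_right (hPleS t ht) hA0.le
        nlinarith [mul_nonneg hε₂.le ht]
      · -- split at A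
        have hintuA : IntervalIntegrable (fun u => psiR h u * u) volume 0 A :=
          hintu.mono_set (by rw [Set.uIcc_of_le hA0.le, Set.uIcc_of_le ht]
                             exact Set.Icc_subset_Icc le_rfl hcase.le)
        have hintuAt : IntervalIntegrable (fun u => psiR h u * u) volume A t :=
          hintu.mono_set (by rw [Set.uIcc_of_le hcase.le, Set.uIcc_of_le ht]
                             exact Set.Icc_subset_Icc hA0.le le_rfl)
        have hψAt : IntervalIntegrable (psiR h) volume A t :=
          (hψII t ht).mono_set (by rw [Set.uIcc_of_le hcase.le, Set.uIcc_of_le ht]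
                                   exact Set.Icc_subset_Icc hA0.le le_rfl)
        have hadd : (∫ u in (0:ℝ)..A, psiR h u * u) + (∫ u in A..t, psiR h u * u)
            = ∫ u in (0:ℝ)..t, psiR h u * u :=
          intervalIntegral.integral_add_adjacent_intervals hintuA hintuAt
        have haddψ : P A + (∫ u in A..t, psiR h u) = P t :=
          intervalIntegral.integral_add_adjacent_intervals (hψII A hA0.le) hψAt
        have hp1 : (∫ u in (0:ℝ)..A, psiR h u * u) ≤ A * S := by
          have h1 : (∫ u in (0:ℝ)..A, psiR h u * u) ≤ ∫ u in (0:ℝ)..A, psiR h u * A := by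
            refine intervalIntegral.integral_mono_on hA0.le hintuA
              ((hψII A hA0.le).mul_const _) fun u hu =>
                mul_le_mul_of_nonneg_left (by linarith [hu.2]) (hψnn u)
          have h2 : (∫ u in (0:ℝ)..A, psiR h u * A) = P A * A :=
            intervalIntegral.integral_mul_const _ _
          have h3 : P A * A ≤ S * A := mul_le_mul_of_nonneg_right (hPleS A hA0.le) hA0.le
          nlinarith
        have hp2 : (∫ u in A..t, psiR h u * u) ≤ ε₂ * t := by
          have h1 : (∫ u in A..t, psiR h u * u) ≤ ∫ u in A..t, psiR h u * t := by
            refine intervalIntegral.integral_mono_on hcase.le hintuAt (hψAt.mul_const _)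
              fun u hu => mul_le_mul_of_nonneg_left (by linarith [hu.2]) (hψnn u)
          have h2 : (∫ u in A..t, psiR h u * t) = (∫ u in A..t, psiR h u) * t :=
            intervalIntegral.integral_mul_const _ _
          have h3 : (∫ u in A..t, psiR h u) ≤ ε₂ := by
            have e1 : (∫ u in A..t, psiR h u) = P t - P A := by linarith
            have e2 : P t - P A = tailR A - tailR t := by
              have := hPsplit t ht; have := hPsplit A hA0.le; linarith
            have := htail_small A le_rfl
            have := htailnn t
            linarith
          calc (∫ u in A..t, psiR h u * u) ≤ (∫ u in A..t, psiR h u) * t := by linarith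
            _ ≤ ε₂ * t := mul_le_mul_of_nonneg_right h3 ht
        linarith
    have : S * t - J = t * (S - P t) + ∫ u in (0:ℝ)..t, psiR h u * u := by
      rw [hJeq]; ring
    linarith
  have hI2bd : |(∫ u in (0:ℝ)..t, psiR h u * (m * (t - u))) - m * S * t|
      ≤ m * (2 * ε₂ * t + 2 * A * S) := by
    rw [hI2eq]
    have h1 : m * J - m * S * t = m * (J - S * t) := by ring
    rw [h1, abs_mul, abs_of_pos hm]
    refine mul_le_mul_of_nonneg_left ?_ hm.le
    rw [abs_of_nonpos (by linarith)]
    linarith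
  -- final assembly
  have hΦt := hK₁ t ht
  have ham : m / (1 - α) * t = m * t + m * S * t := by
    rw [hSdef]; field_simp; ring
  have hdecomp : Φb t + (∫ s in (0:ℝ)..t, psiR h (t - s) * Φb s) - m / (1 - α) * t
      = (Φb t - m * t)
        + (∫ u in (0:ℝ)..t, psiR h u * (Φb (t - u) - m * (t - u)))
        + ((∫ u in (0:ℝ)..t, psiR h u * (m * (t - u))) - m * S * t) := by
    rw [hCoV, hIsplit, ham]; ring
  rw [hdecomp]
  have htri : |Φb t - m * t
        + (∫ u in (0:ℝ)..t, psiR h u * (Φb (t - u) - m * (t - u)))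
        + ((∫ u in (0:ℝ)..t, psiR h u * (m * (t - u))) - m * S * t)|
      ≤ |Φb t - m * t|
        + |∫ u in (0:ℝ)..t, psiR h u * (Φb (t - u) - m * (t - u))|
        + |(∫ u in (0:ℝ)..t, psiR h u * (m * (t - u))) - m * S * t| :=
    le_trans (abs_add_le _ _) (by gcongr; exact abs_add_le _ _)
  have hc1 : ε₁ * (1 + S) = ε / 2 := by
    rw [hε₁def]; field_simp
  have hc2 : 2 * m * ε₂ ≤ ε / 2 := by
    have hm1 : (0:ℝ) < m + 1 := by linarith
    rw [hε₂def]
    have e : 2 * m * (ε / (4 * (m + 1))) = m * ε / (2 * (m + 1)) := by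
      field_simp; ring
    rw [e, div_le_div_iff₀ (by positivity) (by norm_num : (0:ℝ) < 2)]
    nlinarith
  have harith : (ε₁ * t + K₁) + (ε₁ * t + K₁) * S + m * (2 * ε₂ * t + 2 * A * S)
      ≤ ε * t + (K₁ * (1 + S) + 2 * m * A * S) := by
    have e1 : (ε₁ * t + K₁) + (ε₁ * t + K₁) * S + m * (2 * ε₂ * t + 2 * A * S)
        = (ε₁ * (1 + S)) * t + (2 * m * ε₂) * t + (K₁ * (1 + S) + 2 * m * A * S) := by ring
    have e2 : (2 * m * ε₂) * t ≤ (ε / 2) * t := mul_le_mul_of_nonneg_right hc2 ht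
    rw [e1, hc1]
    linarith
  calc |Φb t - m * t
        + (∫ u in (0:ℝ)..t, psiR h u * (Φb (t - u) - m * (t - u)))
        + ((∫ u in (0:ℝ)..t, psiR h u * (m * (t - u))) - m * S * t)|
      ≤ |Φb t - m * t|
        + |∫ u in (0:ℝ)..t, psiR h u * (Φb (t - u) - m * (t - u))|
        + |(∫ u in (0:ℝ)..t, psiR h u * (m * (t - u))) - m * S * t| := htri
    _ ≤ (ε₁ * t + K₁) + (ε₁ * t + K₁) * S + m * (2 * ε₂ * t + 2 * A * S) :=
        add_le_add (add_le_add hΦt hI1bd) hI2bd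
    _ ≤ ε * t + (K₁ * (1 + S) + 2 * m * A * S) := harith

end aux7


noncomputable def PhiB (F : Measure ℝ) (r : ℝ) : ℝ := (renewalMeasure F (Set.Icc 0 r)).toReal

set_option maxHeartbeats 1600000 in
/-- Uniform law of large numbers for the mean `E(t) = Φ(t) + ∫₀ᵗ ψ(t-s)Φ(s) ds` of a
renewal Hawkes process: under Stone's decomposition of the renewal measure `Φ` of an
interarrival distribution `F` with density and mean `1/m`, and for `h ≥ 0` bounded
measurable with `∫₀^∞ h = α < 1` and `h(t) → 0`, one has
`sup_{v∈[0,1]} |E(Tv)/T - v·m/(1-α)| → 0` as `T → ∞`. -/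
theorem uniform_lln_mean_RHP
    (F : Measure ℝ) [IsProbabilityMeasure F] (f : ℝ → ℝ) (m : ℝ) (hm : 0 < m)
    (hfmeas : Measurable f) (hfnn : ∀ x, 0 ≤ f x)
    (hfsupp : ∀ x < (0:ℝ), f x = 0)
    (hdens : F = volume.withDensity (fun x => ENNReal.ofReal (f x)))
    (hmean : ∫ x, x ∂F = 1 / m)
    (Φ₂ : Measure ℝ) [IsFiniteMeasure Φ₂] (φ₁ : ℝ → ℝ)
    (hφmeas : Measurable φ₁) (hφnn : ∀ t, 0 ≤ φ₁ t) (hφbdd : ∃ C, ∀ t, φ₁ t ≤ C)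
    (hφlim : Tendsto φ₁ atTop (nhds m))
    (hStone : renewalMeasure F
      = (volume.restrict (Set.Ici (0:ℝ))).withDensity (fun t => ENNReal.ofReal (φ₁ t))
        + Φ₂)
    (h : ℝ → ℝ) (C α : ℝ)
    (hhmeas : Measurable h) (hhnn : ∀ t, 0 ≤ h t)
    (hhint : IntegrableOn h (Set.Ioi 0))
    (hα : α = ∫ t in Set.Ioi (0:ℝ), h t) (hα1 : α < 1)
    (hhbdd : ∀ t, h t ≤ C) (hhlim : Tendsto h atTop (nhds 0)) :
    Tendsto (fun T : ℝ => ⨆ v : Set.Icc (0:ℝ) 1,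
        |((renewalMeasure F (Set.Icc 0 (T * v))).toReal
          + ∫ s in (0:ℝ)..(T * v), (∑' n : ℕ, convPow h n (T * v - s))
              * (renewalMeasure F (Set.Icc 0 s)).toReal) / T
          - (v : ℝ) * m / (1 - α)|)
      atTop (nhds 0) := by

  have hC : 0 ≤ C := le_trans (hhnn 0) (hhbdd 0)
  have hα0 : 0 ≤ α := by
    rw [hα]; exact setIntegral_nonneg measurableSet_Ioi fun x _ => hhnn x
  have h1α : 0 < 1 - α := by linarith
  obtain ⟨C₁, hφbdd'⟩ := hφbdd
  have hfin : ∀ t : ℝ, renewalMeasure F (Set.Icc 0 t) ≠ ⊤ :=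
    phi_fin (renewalMeasure F) Φ₂ φ₁ C₁ hφmeas hφbdd' hStone
  have hΦmono : Monotone (PhiB F) := fun a b hab =>
    ENNReal.toReal_mono (hfin b) (measure_mono (Set.Icc_subset_Icc_right hab))
  have hΦest : ∀ ε > 0, ∃ K, 0 ≤ K ∧ ∀ t, 0 ≤ t → |PhiB F t - m * t| ≤ ε * t + K :=
    phi_est (renewalMeasure F) Φ₂ φ₁ m C₁ hm hφmeas hφnn hφbdd' hφlim hStone
  have key := key_est hhmeas hhnn hhbdd hhint hα hC hα0 hα1 hm (PhiB F)
    hΦmono.measurable (fun t => ENNReal.toReal_nonneg) hΦmono hΦest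
  have heqPhi : ∀ r : ℝ, (renewalMeasure F (Set.Icc 0 r)).toReal = PhiB F r := fun r => rfl
  simp only [heqPhi]
  refine NormedAddCommGroup.tendsto_nhds_zero.2 fun ε hε => ?_
  obtain ⟨K, hK0, hkey⟩ := key (ε / 2) (by positivity)
  filter_upwards [Filter.eventually_ge_atTop (max 1 (2 * K / ε + 1))] with T hT
  have hT1 : (1:ℝ) ≤ T := le_trans (le_max_left _ _) hT
  have hT0 : (0:ℝ) < T := by linarith
  have hT2 : 2 * K / ε + 1 ≤ T := le_trans (le_max_right _ _) hT
  have hKT : K / T < ε / 2 := by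
    rw [div_lt_iff₀ hT0]
    have h1 : ε / 2 * (2 * K / ε + 1) ≤ ε / 2 * T :=
      mul_le_mul_of_nonneg_left hT2 (by positivity)
    have h2 : ε / 2 * (2 * K / ε + 1) = K + ε / 2 := by field_simp
    linarith
  haveI : Nonempty ↥(Set.Icc (0:ℝ) 1) := ⟨⟨0, by norm_num⟩⟩
  have hbound : ∀ v : ↥(Set.Icc (0:ℝ) 1),
      |(PhiB F (T * v) + ∫ s in (0:ℝ)..(T * v), (∑' n : ℕ, convPow h n (T * v - s))
          * PhiB F s) / T - (v : ℝ) * m / (1 - α)| ≤ ε / 2 + K / T := by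
    intro v
    have hv0 : (0:ℝ) ≤ v := v.2.1
    have hv1 : (v:ℝ) ≤ 1 := v.2.2
    have htv : 0 ≤ T * (v:ℝ) := mul_nonneg hT0.le hv0
    have hcongr : (∫ s in (0:ℝ)..(T * v), (∑' n : ℕ, convPow h n (T * v - s)) * PhiB F s)
        = ∫ s in (0:ℝ)..(T * v), psiR h (T * v - s) * PhiB F s := by
      refine intervalIntegral.integral_congr fun s hs => ?_
      rw [Set.uIcc_of_le htv] at hs
      have hnn : 0 ≤ T * (v:ℝ) - s := by linarith [hs.2]
      rw [(psiR_eq_tsum hhmeas hhnn hhbdd hhint hα hC hα0 hα1 hnn).2.1]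
    rw [hcongr]
    have hkv := hkey (T * (v:ℝ)) htv
    have e1 : (v:ℝ) * m / (1 - α) = (m / (1 - α) * (T * (v:ℝ))) / T := by
      field_simp
    rw [e1, div_sub_div_same, abs_div, abs_of_pos hT0]
    have hnum : |PhiB F (T * (v:ℝ)) + (∫ s in (0:ℝ)..(T * v), psiR h (T * v - s) * PhiB F s)
        - m / (1 - α) * (T * (v:ℝ))| ≤ ε / 2 * (T * (v:ℝ)) + K := hkv
    calc |PhiB F (T * (v:ℝ)) + (∫ s in (0:ℝ)..(T * v), psiR h (T * v - s) * PhiB F s)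
          - m / (1 - α) * (T * (v:ℝ))| / T
        ≤ (ε / 2 * (T * (v:ℝ)) + K) / T := by
          gcongr
      _ = ε / 2 * (v:ℝ) + K / T := by field_simp
      _ ≤ ε / 2 + K / T := by nlinarith
  have hsup0 : (0:ℝ) ≤ ⨆ v : ↥(Set.Icc (0:ℝ) 1),
      |(PhiB F (T * v) + ∫ s in (0:ℝ)..(T * v), (∑' n : ℕ, convPow h n (T * v - s))
          * PhiB F s) / T - (v : ℝ) * m / (1 - α)| :=
    Real.iSup_nonneg fun v => abs_nonneg _
  rw [Real.norm_eq_abs, abs_of_nonneg hsup0]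
  exact lt_of_le_of_lt (ciSup_le hbound) (by linarith)
end
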